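/- arXiv:1210.4715 — 2 statements merged into one kernel-verified Lean document; each statement's English description precedes it below -/
import Mathlib

section
/- Let X be a separable Banach space, Y a Banach space, G ⊂ X open, and f : G → Y a Borel measurable mapping whose restriction to every line meeting G is continuous. Then the set of points x ∈ G at which f is Gâteaux differentiable but not Hadamard differentiable is σ-directionally porous. -/
open Filter Metric Set Topology MeasureTheory

section CommonDefs
variable {X Y : Type*}

/-- `f` is (pointwise) Lipschitz at `x`:
`limsup_{y→x} ‖f y - f x‖/‖y - x‖ < ∞`. -/
def LipschitzAtPt [NormedAddCommGroup X] [NormedAddCommGroup Y]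
    (f : X → Y) (x : X) : Prop :=
  ∃ K > (0:ℝ), ∃ δ > (0:ℝ), ∀ y ∈ ball x δ, ‖f y - f x‖ ≤ K * ‖y - x‖

/-- The (two-sided) Hadamard directional derivative of `f` at `x` in direction `v` is `y`:
`(f (x + t z) - f x)/t → y` as `z → v`, `t → 0`, `t ≠ 0`. -/
def HadamardDerivAt [NormedAddCommGroup X] [NormedSpace ℝ X]
    [NormedAddCommGroup Y] [NormedSpace ℝ Y]
    (f : X → Y) (x v : X) (y : Y) : Prop :=
  Tendsto (fun p : ℝ × X => p.1⁻¹ • (f (x + p.1 • p.2) - f x))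
    ((𝓝[≠] (0:ℝ)) ×ˢ 𝓝 v) (𝓝 y)

/-- The one-sided Hadamard directional derivative of `f` at `x` in direction `v` is `y`:
`(f (x + t z) - f x)/t → y` as `z → v`, `t → 0+`. -/
def HadamardPlusDerivAt [NormedAddCommGroup X] [NormedSpace ℝ X]
    [NormedAddCommGroup Y] [NormedSpace ℝ Y]
    (f : X → Y) (x v : X) (y : Y) : Prop :=
  Tendsto (fun p : ℝ × X => p.1⁻¹ • (f (x + p.1 • p.2) - f x))
    ((𝓝[>] (0:ℝ)) ×ˢ 𝓝 v) (𝓝 y)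

/-- `f` is Gâteaux differentiable at `x` with derivative the continuous linear map `L`. -/
def GateauxDiffAt [NormedAddCommGroup X] [NormedSpace ℝ X]
    [NormedAddCommGroup Y] [NormedSpace ℝ Y]
    (f : X → Y) (x : X) (L : X →L[ℝ] Y) : Prop :=
  ∀ v : X, Tendsto (fun t : ℝ => t⁻¹ • (f (x + t • v) - f x)) (𝓝[≠] (0:ℝ)) (𝓝 (L v))

/-- `f` is Hadamard differentiable at `x` with derivative the continuous linear map `L`. -/
def HadamardDiffAt [NormedAddCommGroup X] [NormedSpace ℝ X]
    [NormedAddCommGroup Y] [NormedSpace ℝ Y]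
    (f : X → Y) (x : X) (L : X →L[ℝ] Y) : Prop :=
  ∀ v : X, HadamardDerivAt f x v (L v)

/-- `A` is directionally porous at `x`. -/
def DirPorousAt [NormedAddCommGroup X] [NormedSpace ℝ X] (A : Set X) (x : X) : Prop :=
  ∃ v : X, v ≠ 0 ∧ ∃ p > (0:ℝ), ∃ t : ℕ → ℝ, (∀ n, 0 < t n) ∧
    Tendsto t atTop (𝓝 (0:ℝ)) ∧ ∀ n, ball (x + t n • v) (p * t n) ∩ A = ∅

/-- `A` is a countable union of directionally porous sets. -/
def SigmaDirPorous [NormedAddCommGroup X] [NormedSpace ℝ X] (A : Set X) : Prop :=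
  ∃ S : ℕ → Set X, A = ⋃ n, S n ∧ ∀ n, ∀ x ∈ S n, DirPorousAt (S n) x

/-- `A` is porous at `x`. -/
def PorousAt [NormedAddCommGroup X] (A : Set X) (x : X) : Prop :=
  ∃ p > (0:ℝ), ∃ y : ℕ → X, (∀ n, y n ≠ x) ∧ Tendsto y atTop (𝓝 x) ∧
    ∀ n, ball (y n) (p * ‖y n - x‖) ∩ A = ∅

/-- `A` is a countable union of porous sets. -/
def SigmaPorous [NormedAddCommGroup X] (A : Set X) : Prop :=
  ∃ S : ℕ → Set X, A = ⋃ n, S n ∧ ∀ n, ∀ x ∈ S n, PorousAt (S n) x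

end CommonDefs

section ZAux1
variable {α : Type*} [TopologicalSpace α]

lemma my_notMeagre_open [BaireSpace α] {U : Set α}
    (hU : IsOpen U) (hne : U.Nonempty) : ¬ IsMeagre U := by
  intro h
  obtain ⟨p, hp1, hp2⟩ := (dense_of_mem_residual h).inter_open_nonempty U hU hne
  exact hp2 hp1

lemma my_isMeagre_iUnion {ι : Sort*} [Countable ι] {s : ι → Set α}
    (h : ∀ i, IsMeagre (s i)) : IsMeagre (⋃ i, s i) := by
  rw [IsMeagre, Set.compl_iUnion]
  exact countable_iInter_mem.mpr h

lemma my_nwd_isMeagre {s : Set α} (h : IsNowhereDense s) : IsMeagre s :=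
  isMeagre_iff_countable_union_isNowhereDense.mpr
    ⟨{s}, by simpa using h, countable_singleton s, by simp⟩

lemma my_meagre_cover {M : Set α} (hM : IsMeagre M) :
    ∃ C : ℕ → Set α, (∀ i, IsClosed (C i)) ∧ (∀ i, IsNowhereDense (C i)) ∧ M ⊆ ⋃ i, C i := by
  obtain ⟨S, hnwd, hcnt, hsub⟩ := isMeagre_iff_countable_union_isNowhereDense.mp hM
  obtain ⟨u, hu⟩ := (hcnt.insert ∅).exists_eq_range (insert_nonempty _ _)
  refine ⟨fun i => closure (u i), fun i => isClosed_closure, fun i => ?_, fun x hx => ?_⟩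
  · have : u i ∈ insert ∅ S := hu ▸ mem_range_self i
    rcases this with h | h
    · simp [h, isNowhereDense_empty.closure]
    · exact (hnwd _ h).closure
  · obtain ⟨t, htS, hxt⟩ := hsub hx
    have : t ∈ range u := hu ▸ mem_insert_of_mem _ htS
    obtain ⟨i, rfl⟩ := this
    exact mem_iUnion.mpr ⟨i, subset_closure hxt⟩

variable {X : Type*} [NormedAddCommGroup X] [NormedSpace ℝ X]

lemma my_escape [CompleteSpace X] [Nontrivial X] {M : Set X} (hM : IsMeagre M) (z : X) :
    ∃ e : X, e ≠ 0 ∧ ‖e‖ ≤ 1 ∧ ∃ s : ℕ → ℝ, (∀ i, 0 < s i) ∧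
      Tendsto s atTop (𝓝 0) ∧ ∀ i, z + s i • e ∉ M := by
  obtain ⟨C, hCcl, hCnwd, hMC⟩ := my_meagre_cover hM
  set K : ℕ → ℚ → ℚ → Set X := fun m a b =>
    {e : X | ∀ s : ℝ, (a:ℝ) ≤ s → s ≤ (b:ℝ) → z + s • e ∈ C m} with hK
  have hKcl : ∀ m a b, IsClosed (K m a b) := by
    intro m a b
    have : K m a b = ⋂ (s : ℝ), ⋂ (_ : (a:ℝ) ≤ s ∧ s ≤ (b:ℝ)), (fun e : X => z + s • e) ⁻¹' (C m) := by
      ext e; simp only [hK, mem_setOf_eq, mem_iInter, mem_preimage]; tauto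
    rw [this]
    exact isClosed_iInter fun s => isClosed_iInter fun _ =>
      (hCcl m).preimage (continuous_const.add (continuous_id.const_smul s))
  have hKnwd : ∀ m (a b : ℚ), 0 < (a:ℝ) → (a:ℝ) ≤ (b:ℝ) → IsNowhereDense (K m a b) := by
    intro m a b ha hab
    rw [(hKcl m a b).isNowhereDense_iff, eq_empty_iff_forall_notMem]
    intro e₀ he₀
    obtain ⟨γ, hγ, hball⟩ := Metric.isOpen_iff.mp isOpen_interior e₀ he₀
    have han : (a:ℝ) ≠ 0 := ne_of_gt ha
    have hsub : ball (z + (a:ℝ) • e₀) ((a:ℝ)*γ) ⊆ C m := by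
      intro w hw
      set e := e₀ + (a:ℝ)⁻¹ • (w - (z + (a:ℝ) • e₀)) with he
      have he1 : e ∈ ball e₀ γ := by
        rw [mem_ball, dist_eq_norm]
        have h1 : e - e₀ = (a:ℝ)⁻¹ • (w - (z + (a:ℝ)•e₀)) := by rw [he]; abel
        rw [h1, norm_smul, norm_inv, Real.norm_eq_abs, abs_of_pos ha]
        rw [mem_ball, dist_eq_norm] at hw
        calc (a:ℝ)⁻¹ * ‖w - (z + (a:ℝ)•e₀)‖ < (a:ℝ)⁻¹ * ((a:ℝ)*γ) :=
              by apply mul_lt_mul_of_pos_left hw (by positivity)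
          _ = γ := by field_simp
      have he2 : z + (a:ℝ) • e = w := by
        rw [he, smul_add, smul_inv_smul₀ han]; abel
      have := hball he1
      have hKe : e ∈ K m a b := interior_subset this
      have := hKe (a:ℝ) le_rfl hab
      rwa [he2] at this
    have hCint : interior (C m) = ∅ := by
      rw [← (hCcl m).isNowhereDense_iff]; exact hCnwd m
    have : ball (z + (a:ℝ) • e₀) ((a:ℝ)*γ) ⊆ interior (C m) :=
      interior_maximal hsub isOpen_ball
    rw [hCint, subset_empty_iff, ball_eq_empty] at this
    nlinarith
  -- the union of all bad sets
  set B : Set X := ⋃ i : ℕ × ℚ × ℚ,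
    (if 0 < i.2.1 ∧ i.2.1 ≤ i.2.2 then K i.1 i.2.1 i.2.2 else ∅) with hB
  have hBm : IsMeagre B := by
    apply my_isMeagre_iUnion
    rintro ⟨m, a, b⟩
    by_cases h : 0 < a ∧ a ≤ b
    · simp only [if_pos h]
      exact my_nwd_isMeagre (hKnwd m a b (by exact_mod_cast h.1) (by exact_mod_cast h.2))
    · simp only [if_neg h]; exact IsMeagre.empty
  obtain ⟨x₁, hx₁⟩ := exists_ne (0:X)
  have hnx₁ : (0:ℝ) < ‖x₁‖ := norm_pos_iff.mpr hx₁
  set e₁ : X := (‖x₁‖⁻¹ * 2⁻¹) • x₁ with he₁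
  have hne₁ : ‖e₁‖ = 2⁻¹ := by
    rw [he₁, norm_smul, Real.norm_eq_abs, abs_of_pos (by positivity)]
    field_simp
  obtain ⟨e, heU, heB⟩ := (dense_of_mem_residual hBm).inter_open_nonempty
    (ball e₁ 4⁻¹) isOpen_ball ⟨e₁, by simp⟩
  have hee₁ : ‖e - e₁‖ < 4⁻¹ := by rwa [mem_ball, dist_eq_norm] at heU
  have hen : e ≠ 0 := by
    intro h
    rw [h] at hee₁; simp at hee₁
    rw [hne₁] at hee₁; norm_num at hee₁
  have hel : ‖e‖ ≤ 1 := by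
    have hre : e = e₁ + (e - e₁) := by abel
    calc ‖e‖ = ‖e₁ + (e - e₁)‖ := by rw [← hre]
      _ ≤ ‖e₁‖ + ‖e - e₁‖ := norm_add_le _ _
      _ ≤ 2⁻¹ + 4⁻¹ := by rw [hne₁]; linarith [hee₁.le]
      _ ≤ 1 := by norm_num
  -- key claim
  have claim : ∀ δ : ℝ, 0 < δ → ∃ s : ℝ, 0 < s ∧ s < δ ∧ z + s • e ∉ M := by
    intro δ hδ
    by_contra hcon
    push_neg at hcon
    set D : ℕ → Set ℝ := fun m => {s : ℝ | z + s • e ∈ C m} with hD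
    have hDcl : ∀ m, IsClosed (D m) :=
      fun m => (hCcl m).preimage (continuous_const.add (continuous_id.smul continuous_const))
    have hcover : Ioo (δ/4) (δ/2) ⊆ ⋃ m, (D m ∩ Ioo (δ/4) (δ/2)) := by
      intro s hs
      have hsM : z + s • e ∈ M := hcon s (by linarith [hs.1]) (by linarith [hs.2])
      obtain ⟨_, ⟨m, rfl⟩, hsm⟩ := hMC hsM
      exact mem_iUnion.mpr ⟨m, hsm, hs⟩
    have : ∃ m, ¬ IsNowhereDense (D m ∩ Ioo (δ/4) (δ/2)) := by
      by_contra hall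
      push_neg at hall
      have : IsMeagre (Ioo (δ/4) (δ/2)) :=
        (my_isMeagre_iUnion (fun m => my_nwd_isMeagre (hall m))).mono hcover
      exact my_notMeagre_open isOpen_Ioo (nonempty_Ioo.mpr (by linarith)) this
    obtain ⟨m, hm⟩ := this
    rw [IsNowhereDense] at hm
    obtain ⟨o, ho⟩ := nonempty_iff_ne_empty.mpr hm
    have hoD : closure (D m ∩ Ioo (δ/4) (δ/2)) ⊆ D m :=
      closure_minimal inter_subset_left (hDcl m)
    have hoI : closure (D m ∩ Ioo (δ/4) (δ/2)) ⊆ Icc (δ/4) (δ/2) :=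
      closure_minimal (inter_subset_right.trans Ioo_subset_Icc_self) isClosed_Icc
    obtain ⟨ρ, hρ, hballo⟩ := Metric.isOpen_iff.mp isOpen_interior o ho
    have hoIcc : o ∈ Icc (δ/4) (δ/2) := hoI (interior_subset ho)
    set ρ' : ℝ := min ρ (δ/8) with hρ'
    have hρ'0 : 0 < ρ' := lt_min hρ (by linarith)
    have hballD : ball o ρ' ⊆ D m := by
      intro s hs
      exact hoD (interior_subset (hballo (mem_ball.mpr (lt_of_lt_of_le (mem_ball.mp hs) (min_le_left _ _)))))
    obtain ⟨a, ha1, ha2⟩ := exists_rat_btwn (show o - ρ' < o by linarith)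
    obtain ⟨b, hb1, hb2⟩ := exists_rat_btwn (show o < o + ρ' by linarith)
    have hapos : 0 < (a:ℝ) := by
      have : δ/4 ≤ o := hoIcc.1
      have : ρ' ≤ δ/8 := min_le_right _ _
      linarith
    have heK : e ∈ K m a b := by
      intro s hs1 hs2
      apply hballD
      rw [mem_ball, dist_eq_norm, Real.norm_eq_abs, abs_lt]
      constructor <;> nlinarith
    apply heB
    rw [hB]
    refine mem_iUnion.mpr ⟨⟨m, a, b⟩, ?_⟩
    have hab : (0:ℚ) < a ∧ a ≤ b := by
      constructor
      · exact_mod_cast hapos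
      · have : (a:ℝ) ≤ (b:ℝ) := by linarith
        exact_mod_cast this
    simp only [if_pos hab]
    exact heK
  have hex : ∀ i : ℕ, ∃ s : ℝ, 0 < s ∧ s < 1/(i+1) ∧ z + s • e ∉ M :=
    fun i => claim (1/(i+1)) (by positivity)
  choose s hs1 hs2 hs3 using hex
  refine ⟨e, hen, hel, s, hs1, ?_, hs3⟩
  apply tendsto_of_tendsto_of_tendsto_of_le_of_le tendsto_const_nhds
    tendsto_one_div_add_atTop_nhds_zero_nat
  · exact fun i => (hs1 i).le
  · exact fun i => (hs2 i).le

end ZAux1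

-- nonzero point in nonempty open set
lemma my_open_nonzero {X : Type*} [NormedAddCommGroup X] [NormedSpace ℝ X] [Nontrivial X]
    {U : Set X} (hU : IsOpen U) (hne : U.Nonempty) : ∃ u ∈ U, u ≠ 0 := by
  obtain ⟨u₀, hu₀⟩ := hne
  by_cases h : u₀ = 0
  · subst h
    obtain ⟨r, hr, hball⟩ := Metric.isOpen_iff.mp hU 0 hu₀
    obtain ⟨x₁, hx₁⟩ := exists_ne (0:X)
    have hnx₁ : (0:ℝ) < ‖x₁‖ := norm_pos_iff.mpr hx₁
    refine ⟨(‖x₁‖⁻¹ * (r/2)) • x₁, hball ?_, ?_⟩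
    · rw [mem_ball, dist_eq_norm, sub_zero, norm_smul, Real.norm_eq_abs,
        abs_of_pos (by positivity)]
      have h2 : ‖x₁‖⁻¹ * (r/2) * ‖x₁‖ = r/2 := by field_simp
      rw [h2]; linarith
    · apply smul_ne_zero (by positivity) hx₁
  · exact ⟨u₀, hu₀, h⟩

section ZAux2
variable {X Y : Type*} [NormedAddCommGroup X] [NormedSpace ℝ X]
  [NormedAddCommGroup Y] [NormedSpace ℝ Y]

lemma my_ratToReal {f : X → Y} {G : Set X}
    (hline : ∀ a v : X, v ≠ 0 →
      ContinuousOn (fun t : ℝ => f (a + t • v)) {t : ℝ | a + t • v ∈ G})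
    (hGo : IsOpen G)
    {x : X} {n : ℕ} (hn : 1 ≤ n) (hball : ball x (3/n) ⊆ G) {z : X} (hz2 : ‖z‖ ≤ 2)
    (hzQ : ∀ tq : ℚ, tq ≠ 0 → |(tq:ℝ)| ≤ 1/n → ‖f (x + (tq:ℝ) • z) - f x‖ ≤ n * |(tq:ℝ)|) :
    ∀ t : ℝ, t ≠ 0 → |t| ≤ 1/n → ‖f (x + t • z) - f x‖ ≤ n * |t| := by
  have hn0 : (0:ℝ) < n := by exact_mod_cast hn
  by_cases hz0 : z = 0
  · intro t ht0 htn
    subst hz0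
    simp only [smul_zero, add_zero, sub_self, norm_zero]
    positivity
  intro t ht0 htn
  -- membership in G for all admissible τ
  have hmem : ∀ τ : ℝ, |τ| ≤ 1/n → x + τ • z ∈ G := by
    intro τ hτ
    apply hball
    rw [mem_ball, dist_eq_norm]
    have h1 : ‖x + τ • z - x‖ = |τ| * ‖z‖ := by
      rw [add_sub_cancel_left, norm_smul, Real.norm_eq_abs]
    rw [h1]
    calc |τ| * ‖z‖ ≤ (1/n) * 2 := by
          apply mul_le_mul hτ hz2 (norm_nonneg _) (by positivity)
      _ < 3/n := by
          rw [div_mul_eq_mul_div, one_mul]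
          exact (div_lt_div_iff_of_pos_right hn0).mpr (by norm_num)
  -- continuity at t
  have hS : IsOpen {τ : ℝ | x + τ • z ∈ G} :=
    hGo.preimage (continuous_const.add (continuous_id.smul continuous_const))
  have hcontAt : ContinuousAt (fun τ : ℝ => f (x + τ • z)) t :=
    (hline x z hz0).continuousAt (hS.mem_nhds (hmem t htn))
  -- rational approximating sequence
  have key : ∃ q : ℕ → ℚ, (∀ i, q i ≠ 0 ∧ |((q i):ℝ)| ≤ 1/n) ∧
      Tendsto (fun i => ((q i):ℝ)) atTop (𝓝 t) := by
    rcases lt_or_gt_of_ne ht0 with htneg | htpos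
    · -- t < 0 : pick q i ∈ (t, min (t + 1/(i+1)) (t/2))
      have hsel : ∀ i : ℕ, ∃ q : ℚ, t < (q:ℝ) ∧ (q:ℝ) < min (t + 1/(i+1)) (t/2) := by
        intro i
        apply exists_rat_btwn
        have h1 : (0:ℝ) < 1/((i:ℝ)+1) := by positivity
        apply lt_min (by linarith) (by linarith)
      choose q hql hqr using hsel
      have habs : |t| = -t := abs_of_neg htneg
      refine ⟨q, fun i => ⟨?_, ?_⟩, ?_⟩
      · have := (hqr i).trans_le (min_le_right _ _)
        have hq0 : ((q i):ℝ) < 0 := by linarith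
        intro hc
        rw [hc] at hq0; norm_num at hq0
      · have h2 := (hqr i).trans_le (min_le_right _ _)
        have hq0 : ((q i):ℝ) < 0 := by linarith
        rw [abs_of_neg hq0]
        have := hql i
        rw [habs] at htn
        linarith
      · apply tendsto_of_tendsto_of_tendsto_of_le_of_le (g := fun _ : ℕ => t)
          (h := fun i : ℕ => t + 1/((i:ℝ)+1)) tendsto_const_nhds
        · have : Tendsto (fun i : ℕ => t + 1/((i:ℝ)+1)) atTop (𝓝 (t + 0)) :=
            tendsto_const_nhds.add tendsto_one_div_add_atTop_nhds_zero_nat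
          simpa using this
        · exact fun i => (hql i).le
        · exact fun i => ((hqr i).trans_le (min_le_left _ _)).le
    · -- 0 < t : pick q i ∈ (max (t - 1/(i+1)) (t/2), t)
      have hsel : ∀ i : ℕ, ∃ q : ℚ, max (t - 1/(i+1)) (t/2) < (q:ℝ) ∧ (q:ℝ) < t := by
        intro i
        apply exists_rat_btwn
        have h1 : (0:ℝ) < 1/((i:ℝ)+1) := by positivity
        apply max_lt (by linarith) (by linarith)
      choose q hql hqr using hsel
      have habs : |t| = t := abs_of_pos htpos
      refine ⟨q, fun i => ⟨?_, ?_⟩, ?_⟩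
      · have := (le_max_right (t - 1/((i:ℝ)+1)) (t/2)).trans_lt (hql i)
        have hq0 : (0:ℝ) < ((q i):ℝ) := by linarith
        intro hc
        rw [hc] at hq0; norm_num at hq0
      · have h2 := (le_max_right (t - 1/((i:ℝ)+1)) (t/2)).trans_lt (hql i)
        have hq0 : (0:ℝ) < ((q i):ℝ) := by linarith
        rw [abs_of_pos hq0]
        have := hqr i
        rw [habs] at htn
        linarith
      · apply tendsto_of_tendsto_of_tendsto_of_le_of_le
          (g := fun i : ℕ => t - 1/((i:ℝ)+1)) (h := fun _ : ℕ => t)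
        · have : Tendsto (fun i : ℕ => t - 1/((i:ℝ)+1)) atTop (𝓝 (t - 0)) :=
            tendsto_const_nhds.sub tendsto_one_div_add_atTop_nhds_zero_nat
          simpa using this
        · exact tendsto_const_nhds
        · exact fun i => ((le_max_left (t - 1/((i:ℝ)+1)) (t/2)).trans_lt (hql i)).le
        · exact fun i => (hqr i).le
  obtain ⟨q, hq1, hq2⟩ := key
  have hFt : Tendsto (fun i => ‖f (x + ((q i):ℝ) • z) - f x‖) atTop
      (𝓝 ‖f (x + t • z) - f x‖) := by
    have h0 : Tendsto (fun i => f (x + ((q i):ℝ) • z)) atTop (𝓝 (f (x + t • z))) :=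
      hcontAt.tendsto.comp hq2
    exact (h0.sub tendsto_const_nhds).norm
  have hRt : Tendsto (fun i => (n:ℝ) * |((q i):ℝ)|) atTop (𝓝 ((n:ℝ) * |t|)) :=
    (tendsto_const_nhds.mul hq2.abs)
  exact le_of_tendsto_of_tendsto' hFt hRt (fun i => hzQ (q i) (hq1 i).1 (hq1 i).2)

end ZAux2

section ZFB
variable {X Y : Type*} [NormedAddCommGroup X] [NormedSpace ℝ X] [CompleteSpace X]
    [TopologicalSpace.SeparableSpace X] [MeasurableSpace X] [BorelSpace X] [Nontrivial X]
    [NormedAddCommGroup Y] [NormedSpace ℝ Y] [MeasurableSpace Y] [BorelSpace Y]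

lemma my_fullball {G : Set X} (hG : IsOpen G) {f : X → Y} (hmeas : Measurable f)
    (hline : ∀ a v : X, v ≠ 0 →
      ContinuousOn (fun t : ℝ => f (a + t • v)) {t : ℝ | a + t • v ∈ G})
    {x : X} (hx : x ∈ G) {L : X →L[ℝ] Y}
    (hL : ∀ v : X, Tendsto (fun t : ℝ => t⁻¹ • (f (x + t • v) - f x))
      (𝓝[≠] (0:ℝ)) (𝓝 (L v))) :
    ∃ m : ℕ, 1 ≤ m ∧ ∃ k : ℕ, TopologicalSpace.denseSeq X k ≠ 0 ∧ ∃ q : ℚ, 0 < q ∧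
      ∀ z ∈ ball (TopologicalSpace.denseSeq X k) (q:ℝ), ∀ t : ℝ, t ≠ 0 → |t| ≤ 1/(m:ℝ) →
        ‖f (x + t • z) - f x‖ ≤ (m:ℝ) * |t| := by
  obtain ⟨r, hr0, hrG⟩ := Metric.isOpen_iff.mp hG x hx
  obtain ⟨n₀, hn₀⟩ := exists_nat_gt (3/r + 1)
  have hrpos : (0:ℝ) < 3/r := by positivity
  have hn₀1 : (1:ℝ) ≤ (n₀:ℝ) := by linarith
  have hn₀pos : (0:ℝ) < (n₀:ℝ) := by linarith
  have hn₀G : ball x (3/(n₀:ℝ)) ⊆ G := by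
    apply Subset.trans _ hrG
    apply ball_subset_ball
    rw [div_le_iff₀ hn₀pos]
    have h3r : 3/r < (n₀:ℝ) := by linarith
    rw [div_lt_iff₀ hr0] at h3r
    linarith
  -- the directionally-controlled sets
  set F : ℕ → Set X := fun j => {z : X | ‖z‖ ≤ 2} ∩
    ⋂ (tq : ℚ), ⋂ (_ : tq ≠ 0 ∧ |(tq:ℝ)| ≤ 1/((n₀+j : ℕ):ℝ)),
      {z : X | ‖f (x + (tq:ℝ) • z) - f x‖ ≤ ((n₀+j : ℕ):ℝ) * |(tq:ℝ)|} with hF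
  have hFdef : ∀ j z, z ∈ F j ↔ (‖z‖ ≤ 2 ∧ ∀ tq : ℚ, tq ≠ 0 → |(tq:ℝ)| ≤ 1/((n₀+j : ℕ):ℝ) →
      ‖f (x + (tq:ℝ) • z) - f x‖ ≤ ((n₀+j : ℕ):ℝ) * |(tq:ℝ)|) := by
    intro j z
    simp only [hF, mem_inter_iff, mem_setOf_eq, mem_iInter]
    tauto
  have hFmeas : ∀ j, MeasurableSet (F j) := by
    intro j
    apply MeasurableSet.inter
    · exact (isClosed_le continuous_norm continuous_const).measurableSet
    · apply MeasurableSet.iInter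
      intro tq
      apply MeasurableSet.iInter
      intro _
      have h1 : Measurable fun z : X => f (x + (tq:ℝ) • z) :=
        hmeas.comp ((continuous_const.add (continuous_id.const_smul ((tq:ℝ)))).measurable)
      have h2 : Measurable fun z : X => ‖f (x + (tq:ℝ) • z) - f x‖ :=
        ((continuous_id.sub continuous_const).norm).measurable.comp h1
      exact measurableSet_le h2 measurable_const
  -- coverage
  have hcover : closedBall (0:X) 2 ⊆ ⋃ j, F j := by
    intro z hz
    rw [mem_closedBall_zero_iff] at hz
    have h1 := (Metric.tendsto_nhds.mp (hL z)) 1 one_pos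
    rw [eventually_nhdsWithin_iff, Metric.eventually_nhds_iff] at h1
    obtain ⟨δ, hδ0, hδ⟩ := h1
    obtain ⟨j', hj'⟩ := exists_nat_gt (max (‖L z‖ + 1) (1/δ))
    refine mem_iUnion.mpr ⟨j', ?_⟩
    have hmge : (max (‖L z‖ + 1) (1/δ)) < ((n₀ + j' : ℕ):ℝ) := by
      apply hj'.trans_le
      exact_mod_cast Nat.le_add_left j' n₀
    have hmpos : (0:ℝ) < ((n₀ + j' : ℕ):ℝ) := by
      have : (0:ℝ) < ‖L z‖ + 1 := by positivity
      have := (le_max_left (‖L z‖ + 1) (1/δ)).trans_lt hmge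
      linarith
    rw [hFdef]
    refine ⟨hz, ?_⟩
    intro tq htq0 htqle
    have h1mδ : 1/((n₀ + j' : ℕ):ℝ) < δ := by
      have h2 : 1/δ < ((n₀ + j' : ℕ):ℝ) := (le_max_right _ _).trans_lt hmge
      rw [div_lt_iff₀ hmpos]
      rw [div_lt_iff₀ hδ0] at h2
      nlinarith
    have htqR : ((tq:ℝ)) ≠ 0 := by exact_mod_cast htq0
    have hq := hδ (y := (tq:ℝ)) (by rw [Real.dist_eq, sub_zero]; exact lt_of_le_of_lt htqle h1mδ)
      (by simpa using htqR)
    rw [dist_eq_norm] at hq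
    have hquot : ‖(tq:ℝ)⁻¹ • (f (x + (tq:ℝ) • z) - f x)‖ ≤ ‖L z‖ + 1 := by
      calc ‖(tq:ℝ)⁻¹ • (f (x + (tq:ℝ) • z) - f x)‖
          = ‖((tq:ℝ)⁻¹ • (f (x + (tq:ℝ) • z) - f x) - L z) + L z‖ :=
            congrArg norm (by abel)
        _ ≤ ‖(tq:ℝ)⁻¹ • (f (x + (tq:ℝ) • z) - f x) - L z‖ + ‖L z‖ := norm_add_le _ _
        _ ≤ ‖L z‖ + 1 := by linarith [hq.le]
    have hrw : f (x + (tq:ℝ) • z) - f x = (tq:ℝ) • ((tq:ℝ)⁻¹ • (f (x + (tq:ℝ) • z) - f x)) :=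
      (smul_inv_smul₀ htqR _).symm
    calc ‖f (x + (tq:ℝ) • z) - f x‖
        = |(tq:ℝ)| * ‖(tq:ℝ)⁻¹ • (f (x + (tq:ℝ) • z) - f x)‖ := by
          rw [hrw, norm_smul, Real.norm_eq_abs]
          rw [← hrw]
      _ ≤ |(tq:ℝ)| * (‖L z‖ + 1) := by
          apply mul_le_mul_of_nonneg_left hquot (abs_nonneg _)
      _ ≤ |(tq:ℝ)| * ((n₀ + j' : ℕ):ℝ) := by
          apply mul_le_mul_of_nonneg_left _ (abs_nonneg _)
          exact ((le_max_left _ _).trans_lt hmge).le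
      _ = ((n₀ + j' : ℕ):ℝ) * |(tq:ℝ)| := mul_comm _ _
  -- some F j is nonmeager
  have hnonmea : ∃ j, ¬ IsMeagre (F j) := by
    by_contra hall
    push_neg at hall
    have hmea : IsMeagre (ball (0:X) 1) := (my_isMeagre_iUnion hall).mono
      ((ball_subset_closedBall.trans (closedBall_subset_closedBall one_le_two)).trans hcover)
    exact my_notMeagre_open isOpen_ball ⟨0, mem_ball_self one_pos⟩ hmea
  obtain ⟨j, hjF⟩ := hnonmea
  -- Baire property
  obtain ⟨U, hUo, hUeq⟩ := (hFmeas j).residualEq_isOpen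
  have hDres : {w : X | w ∈ F j ↔ w ∈ U} ∈ residual X := by
    have h := Filter.eventuallyEq_set.mp hUeq
    exact h
  set M : Set X := {w : X | w ∈ F j ↔ w ∈ U}ᶜ with hMdef
  have hMmea : IsMeagre M := by rw [IsMeagre, hMdef, compl_compl]; exact hDres
  have hUF : ∀ w, w ∈ U → w ∉ M → w ∈ F j := by
    intro w h1 h2
    rw [hMdef, mem_compl_iff, not_not] at h2
    exact h2.mpr h1
  have hFU : ∀ w, w ∈ F j → w ∉ M → w ∈ U := by
    intro w h1 h2
    rw [hMdef, mem_compl_iff, not_not] at h2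
    exact h2.mp h1
  have hUne : U.Nonempty := by
    rw [nonempty_iff_ne_empty]
    intro hUe
    apply hjF
    apply hMmea.mono
    intro w hw
    by_contra hwM
    have := hFU w hw hwM
    rw [hUe] at this
    exact this
  have hU2 : U ⊆ closedBall (0:X) 2 := by
    by_contra hsub
    obtain ⟨u, huU, hu2⟩ := not_subset.mp hsub
    have hVo : IsOpen (U ∩ (closedBall (0:X) 2)ᶜ) :=
      hUo.inter isClosed_closedBall.isOpen_compl
    have hVsub : U ∩ (closedBall (0:X) 2)ᶜ ⊆ M := by
      intro w hw
      by_contra hwM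
      have hwF := hUF w hw.1 hwM
      exact hw.2 ((hFdef j w).mp hwF |>.1 |> mem_closedBall_zero_iff.mpr)
    exact my_notMeagre_open hVo ⟨u, huU, hu2⟩ (hMmea.mono hVsub)
  -- pick a nonzero dense-sequence point in U
  have hU'o : IsOpen (U ∩ {(0:X)}ᶜ) := hUo.inter isOpen_compl_singleton
  have hU'ne : (U ∩ {(0:X)}ᶜ).Nonempty := by
    obtain ⟨u, huU, hu0⟩ := my_open_nonzero hUo hUne
    exact ⟨u, huU, hu0⟩
  obtain ⟨k, hk⟩ := (TopologicalSpace.denseRange_denseSeq X).exists_mem_open hU'o hU'ne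
  set w : X := TopologicalSpace.denseSeq X k with hwdef
  have hw0 : w ≠ 0 := hk.2
  have hwU : w ∈ U := hk.1
  -- choose the rational radius
  obtain ⟨r₂, hr₂0, hr₂⟩ := Metric.isOpen_iff.mp hU'o w hk
  obtain ⟨q, hq0, hq1⟩ := exists_rat_btwn (show (0:ℝ) < min (r₂/2) 1 by positivity)
  have hqpos : (0:ℚ) < q := by exact_mod_cast hq0
  have hqr₂ : (q:ℝ) < r₂/2 := lt_of_lt_of_le hq1 (min_le_left _ _)
  have hq1' : (q:ℝ) < 1 := lt_of_lt_of_le hq1 (min_le_right _ _)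
  set m : ℕ := n₀ + j with hmdef
  have hm1 : 1 ≤ m := by
    have : 1 ≤ n₀ := by exact_mod_cast hn₀1
    omega
  have hmpos : (0:ℝ) < (m:ℝ) := by exact_mod_cast hm1
  have hmG : ball x (3/(m:ℝ)) ⊆ G := by
    apply Subset.trans _ hn₀G
    apply ball_subset_ball
    apply div_le_div_of_nonneg_left (by norm_num) hn₀pos
    exact_mod_cast Nat.le_add_right n₀ j
  refine ⟨m, hm1, k, hw0, q, hqpos, ?_⟩
  intro z hz t ht0 htm
  -- escape the meager set M from z
  obtain ⟨e, he0, he1, s, hs0, hstend, hsesc⟩ := my_escape hMmea z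
  have hzw : ‖z - w‖ < (q:ℝ) := by rwa [mem_ball, dist_eq_norm] at hz
  -- membership of the approximating points in F j
  have hmemF : ∀ᶠ i in atTop, z + s i • e ∈ F j := by
    have hev : ∀ᶠ i in atTop, s i < (q:ℝ) := hstend.eventually_lt_const hq0
    filter_upwards [hev] with i hsi
    apply hUF _ _ (hsesc i)
    apply hr₂ ?_ |>.1
    rw [mem_ball, dist_eq_norm]
    calc ‖z + s i • e - w‖ = ‖(z - w) + s i • e‖ := congrArg norm (by abel)
      _ ≤ ‖z - w‖ + ‖s i • e‖ := norm_add_le _ _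
      _ ≤ ‖z - w‖ + s i * 1 := by
          rw [norm_smul, Real.norm_eq_abs, abs_of_pos (hs0 i)]
          have := mul_le_mul_of_nonneg_left he1 (hs0 i).le
          linarith
      _ < (q:ℝ) + (q:ℝ) := by linarith
      _ ≤ r₂ := by linarith
  -- real-parameter control for the approximating points
  have hctrl : ∀ᶠ i in atTop, ‖f (x + t • (z + s i • e)) - f x‖ ≤ (m:ℝ) * |t| := by
    filter_upwards [hmemF] with i hiF
    have hdat := (hFdef j _).mp hiF
    exact my_ratToReal hline hG hm1 hmG hdat.1 hdat.2 t ht0 htm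
  -- pass to the limit along the line through x + t • z in direction t • e
  have hzn : ‖z‖ < 3 := by
    have : ‖w‖ ≤ 2 := mem_closedBall_zero_iff.mp (hU2 hwU)
    calc ‖z‖ = ‖(z - w) + w‖ := congrArg norm (by abel)
      _ ≤ ‖z - w‖ + ‖w‖ := norm_add_le _ _
      _ < (q:ℝ) + 2 := by linarith
      _ ≤ 3 := by linarith
  have haG : x + t • z ∈ G := by
    apply hmG
    rw [mem_ball, dist_eq_norm, add_sub_cancel_left, norm_smul, Real.norm_eq_abs]
    have habs : 0 < |t| := abs_pos.mpr ht0
    calc |t| * ‖z‖ < |t| * 3 := by apply mul_lt_mul_of_pos_left hzn habs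
      _ ≤ (1/(m:ℝ)) * 3 := by apply mul_le_mul_of_nonneg_right htm (by norm_num)
      _ = 3/(m:ℝ) := by ring
  have hte : t • e ≠ 0 := smul_ne_zero ht0 he0
  have hSo : IsOpen {σ : ℝ | (x + t • z) + σ • (t • e) ∈ G} :=
    hG.preimage (continuous_const.add (continuous_id.smul continuous_const))
  have h0S : (0:ℝ) ∈ {σ : ℝ | (x + t • z) + σ • (t • e) ∈ G} := by
    simp only [mem_setOf_eq, zero_smul, add_zero]
    exact haG
  have hca : ContinuousAt (fun σ : ℝ => f ((x + t • z) + σ • (t • e))) 0 :=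
    (hline (x + t • z) (t • e) hte).continuousAt (hSo.mem_nhds h0S)
  have hlim : Tendsto (fun i => f ((x + t • z) + s i • (t • e))) atTop (𝓝 (f (x + t • z))) := by
    have h1 := hca.tendsto.comp hstend
    simpa [Function.comp_def] using h1
  have hlimn : Tendsto (fun i => ‖f ((x + t • z) + s i • (t • e)) - f x‖) atTop
      (𝓝 ‖f (x + t • z) - f x‖) := (hlim.sub tendsto_const_nhds).norm
  have hrw : ∀ i, x + t • (z + s i • e) = (x + t • z) + s i • (t • e) := by
    intro i
    rw [smul_add, smul_comm]
    abel
  apply le_of_tendsto hlimn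
  filter_upwards [hctrl] with i hi
  rw [← hrw i]
  exact hi

end ZFB

section ZExt
variable {X Y : Type*} [NormedAddCommGroup X] [NormedSpace ℝ X]
  [NormedAddCommGroup Y] [NormedSpace ℝ Y]

lemma my_extract {f : X → Y} {x : X} {L : X →L[ℝ] Y} {v₀ : X}
    (hnt : ¬ Tendsto (fun p : ℝ × X => p.1⁻¹ • (f (x + p.1 • p.2) - f x))
      ((𝓝[≠] (0:ℝ)) ×ˢ 𝓝 v₀) (𝓝 (L v₀))) :
    ∃ v : X, (v = v₀ ∨ v = -v₀) ∧ ∃ ε : ℝ, 0 < ε ∧ ∃ τ : ℕ → ℝ, ∃ ζ : ℕ → X,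
      (∀ i, 0 < τ i ∧ τ i < 1/(i+1)) ∧ (∀ i, ‖ζ i - v‖ < 1/(i+1)) ∧
      ∀ i, ε ≤ ‖(τ i)⁻¹ • (f (x + τ i • ζ i) - f x) - L v‖ := by
  rw [← nhdsLT_sup_nhdsGT (0:ℝ), sup_prod, tendsto_sup] at hnt
  rw [not_and_or] at hnt
  rcases hnt with hnt | hnt
  · -- failure from the left; reflect
    rw [Metric.tendsto_nhds] at hnt
    push_neg at hnt
    obtain ⟨ε, hε0, hε⟩ := hnt
    have hsel : ∀ i : ℕ, ∃ p : ℝ × X, (p.1 ∈ Ioo (-(1/((i:ℝ)+1))) 0 ∧ p.2 ∈ ball v₀ (1/((i:ℝ)+1)))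
        ∧ ε ≤ dist (p.1⁻¹ • (f (x + p.1 • p.2) - f x)) (L v₀) := by
      intro i
      have hmem : (Ioo (-(1/((i:ℝ)+1))) 0) ×ˢ ball v₀ (1/((i:ℝ)+1)) ∈
          (𝓝[<] (0:ℝ)) ×ˢ 𝓝 v₀ := by
        apply prod_mem_prod
        · exact Ioo_mem_nhdsLT_of_mem ⟨neg_lt_zero.mpr (by positivity), le_refl (0:ℝ)⟩
        · exact ball_mem_nhds _ (by positivity)
      by_contra hcon
      push_neg at hcon
      apply hε
      filter_upwards [hmem] with p hp
      exact not_le.mpr (hcon p ⟨hp.1, hp.2⟩)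
    choose p hp1 hp2 using hsel
    refine ⟨-v₀, Or.inr rfl, ε, hε0, fun i => -(p i).1, fun i => -(p i).2, ?_, ?_, ?_⟩
    · intro i
      have := (hp1 i).1
      constructor
      · exact neg_pos.mpr this.2
      · linarith [this.1]
    · intro i
      have := (hp1 i).2
      rw [mem_ball, dist_eq_norm] at this
      calc ‖-(p i).2 - -v₀‖ = ‖(p i).2 - v₀‖ := by rw [← norm_neg]; congr 1; abel
        _ < 1/((i:ℝ)+1) := this
    · intro i
      have h2 := hp2 i
      rw [dist_eq_norm] at h2
      have hne : (p i).1 ≠ 0 := ne_of_lt (hp1 i).1.2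
      have hkey : (-(p i).1)⁻¹ • (f (x + (-(p i).1) • (-(p i).2)) - f x) - L (-v₀)
          = -((p i).1⁻¹ • (f (x + (p i).1 • (p i).2) - f x) - L v₀) := by
        rw [neg_smul_neg, inv_neg, neg_smul, map_neg]
        abel
      rw [hkey, norm_neg]
      exact h2
  · -- failure from the right
    rw [Metric.tendsto_nhds] at hnt
    push_neg at hnt
    obtain ⟨ε, hε0, hε⟩ := hnt
    have hsel : ∀ i : ℕ, ∃ p : ℝ × X, (p.1 ∈ Ioo 0 (1/((i:ℝ)+1)) ∧ p.2 ∈ ball v₀ (1/((i:ℝ)+1)))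
        ∧ ε ≤ dist (p.1⁻¹ • (f (x + p.1 • p.2) - f x)) (L v₀) := by
      intro i
      have hmem : (Ioo 0 (1/((i:ℝ)+1))) ×ˢ ball v₀ (1/((i:ℝ)+1)) ∈
          (𝓝[>] (0:ℝ)) ×ˢ 𝓝 v₀ := by
        apply prod_mem_prod
        · exact Ioo_mem_nhdsGT_of_mem ⟨le_refl 0, by positivity⟩
        · exact ball_mem_nhds _ (by positivity)
      by_contra hcon
      push_neg at hcon
      apply hε
      filter_upwards [hmem] with p hp
      exact not_le.mpr (hcon p ⟨hp.1, hp.2⟩)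
    choose p hp1 hp2 using hsel
    refine ⟨v₀, Or.inl rfl, ε, hε0, fun i => (p i).1, fun i => (p i).2, ?_, ?_, ?_⟩
    · exact fun i => ⟨(hp1 i).1.1, (hp1 i).1.2⟩
    · intro i
      have := (hp1 i).2
      rwa [mem_ball, dist_eq_norm] at this
    · intro i
      have h2 := hp2 i
      rwa [dist_eq_norm] at h2

end ZExt

section ZPor1
variable {X Y : Type*} [NormedAddCommGroup X] [NormedSpace ℝ X]
  [NormedAddCommGroup Y] [NormedSpace ℝ Y]

lemma my_P1porous {f : X → Y} {P : Set X} {n : ℕ} {w : X} {q : ℝ}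
    (hn : 1 ≤ n) (hq : 0 < q) (hw : w ≠ 0)
    (hP : ∀ x' ∈ P, ∀ z ∈ ball w q, ∀ t : ℝ, t ≠ 0 → |t| ≤ 1/(n:ℝ) →
      ‖f (x' + t • z) - f x'‖ ≤ (n:ℝ) * |t|)
    {x : X} (hx : x ∈ P)
    (hbad : ∀ ρ : ℝ, 0 < ρ → ∃ y : X, ‖y - x‖ < ρ ∧
      (4*(n:ℝ)/q + 1) * ‖y - x‖ < ‖f y - f x‖) :
    ∃ v : X, v ≠ 0 ∧ ∃ p > (0:ℝ), ∃ t : ℕ → ℝ, (∀ i, 0 < t i) ∧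
      Tendsto t atTop (𝓝 (0:ℝ)) ∧ ∀ i, ball (x + t i • v) (p * t i) ∩ P = ∅ := by
  have hn0 : (0:ℝ) < n := by exact_mod_cast hn
  have hsel : ∀ j : ℕ, ∃ y : X, ‖y - x‖ < min (1/((j:ℝ)+1)) (q/(2*n)) ∧
      (4*(n:ℝ)/q + 1) * ‖y - x‖ < ‖f y - f x‖ :=
    fun j => hbad _ (lt_min (by positivity) (by positivity))
  choose y hy1 hy2 using hsel
  have hd0 : ∀ j, 0 < ‖y j - x‖ := by
    intro j
    rcases eq_or_lt_of_le (norm_nonneg (y j - x)) with h | h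
    · exfalso
      have h2 := hy2 j
      rw [← h, mul_zero] at h2
      have h3 : y j = x := sub_eq_zero.mp (norm_eq_zero.mp h.symm)
      rw [h3, sub_self, norm_zero] at h2
      exact lt_irrefl 0 h2
    · exact h
  have htn : ∀ j, 2 * ‖y j - x‖ / q ≤ 1/(n:ℝ) := by
    intro j
    have h1 : ‖y j - x‖ ≤ q/(2*n) := le_of_lt ((hy1 j).trans_le (min_le_right _ _))
    rw [le_div_iff₀ (by positivity)] at h1
    rw [div_le_div_iff₀ hq hn0]
    nlinarith
  refine ⟨-w, neg_ne_zero.mpr hw, q/4, by positivity,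
    fun j => 2 * ‖y j - x‖ / q, fun j => by have := hd0 j; positivity, ?_, ?_⟩
  · apply tendsto_of_tendsto_of_tendsto_of_le_of_le (g := fun _ : ℕ => (0:ℝ))
      (h := fun j : ℕ => 2/q * (1/((j:ℝ)+1))) tendsto_const_nhds
    · have : Tendsto (fun j : ℕ => 2/q * (1/((j:ℝ)+1))) atTop (𝓝 (2/q * 0)) :=
        tendsto_const_nhds.mul tendsto_one_div_add_atTop_nhds_zero_nat
      simpa using this
    · intro j
      have := hd0 j
      positivity
    · intro j
      have h1 : ‖y j - x‖ ≤ 1/((j:ℝ)+1) := le_of_lt ((hy1 j).trans_le (min_le_left _ _))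
      calc 2 * ‖y j - x‖ / q ≤ 2 * (1/((j:ℝ)+1)) / q := by gcongr
        _ = 2/q * (1/((j:ℝ)+1)) := by ring
  · intro j
    rw [eq_empty_iff_forall_notMem]
    rintro x' ⟨hx'b, hx'P⟩
    set s : ℝ := 2 * ‖y j - x‖ / q with hsdef
    have hs0 : 0 < s := by have := hd0 j; positivity
    have hsne : s ≠ 0 := ne_of_gt hs0
    have hsn : s ≤ 1/(n:ℝ) := htn j
    have hball : ‖x' - x + s • w‖ < q/4 * s := by
      rw [mem_ball, dist_eq_norm] at hx'b
      calc ‖x' - x + s • w‖ = ‖x' - (x + s • -w)‖ := congrArg norm (by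
            rw [smul_neg]; abel)
        _ < q/4 * s := hx'b
    -- (a)
    have ha : ‖f x' - f x‖ ≤ (n:ℝ) * s := by
      have hza : w - s⁻¹ • (x' - x + s • w) ∈ ball w q := by
        rw [mem_ball, dist_eq_norm]
        have h1 : w - s⁻¹ • (x' - x + s • w) - w = -(s⁻¹ • (x' - x + s • w)) := by abel
        rw [h1, norm_neg, norm_smul, Real.norm_eq_abs, abs_of_pos (by positivity)]
        have h2 : s⁻¹ * ‖x' - x + s • w‖ < s⁻¹ * (q/4 * s) :=
          mul_lt_mul_of_pos_left hball (by positivity)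
        have h3 : s⁻¹ * (q/4 * s) = q/4 := by field_simp
        rw [h3] at h2
        linarith
      have hpt : x + (-s) • (w - s⁻¹ • (x' - x + s • w)) = x' := by
        match_scalars <;> field_simp <;> ring
      have := hP x hx _ hza (-s) (neg_ne_zero.mpr hsne)
        (by rw [abs_neg, abs_of_pos hs0]; exact hsn)
      rw [hpt, abs_neg, abs_of_pos hs0] at this
      exact this
    -- (b)
    have hb : ‖f (y j) - f x'‖ ≤ (n:ℝ) * s := by
      have hdq : s⁻¹ * ‖y j - x‖ = q/2 := by
        rw [hsdef]
        field_simp [ne_of_gt (hd0 j)]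
      have hzb : s⁻¹ • (y j - x') ∈ ball w q := by
        rw [mem_ball, dist_eq_norm]
        have hsplit : s⁻¹ • (y j - x') - w = s⁻¹ • (y j - x) - s⁻¹ • (x' - x + s • w) := by
          match_scalars <;> field_simp <;> ring
        rw [hsplit]
        have h1 : ‖s⁻¹ • (y j - x) - s⁻¹ • (x' - x + s • w)‖ ≤
            ‖s⁻¹ • (y j - x)‖ + ‖s⁻¹ • (x' - x + s • w)‖ := norm_sub_le _ _
        have h2 : ‖s⁻¹ • (y j - x)‖ = q/2 := by
          rw [norm_smul, Real.norm_eq_abs, abs_of_pos (by positivity)]; exact hdq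
        have h3 : ‖s⁻¹ • (x' - x + s • w)‖ < q/4 := by
          rw [norm_smul, Real.norm_eq_abs, abs_of_pos (by positivity)]
          have h4 : s⁻¹ * ‖x' - x + s • w‖ < s⁻¹ * (q/4 * s) :=
            mul_lt_mul_of_pos_left hball (by positivity)
          have h5 : s⁻¹ * (q/4 * s) = q/4 := by field_simp
          linarith [h4, h5.le]
        calc ‖s⁻¹ • (y j - x) - s⁻¹ • (x' - x + s • w)‖
            ≤ ‖s⁻¹ • (y j - x)‖ + ‖s⁻¹ • (x' - x + s • w)‖ := h1
          _ < q/2 + q/4 := by rw [h2]; linarith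
          _ < q := by linarith
      have hpt : x' + s • (s⁻¹ • (y j - x')) = y j := by
        rw [smul_inv_smul₀ hsne]; abel
      have := hP x' hx'P _ hzb s hsne (by rw [abs_of_pos hs0]; exact hsn)
      rw [hpt, abs_of_pos hs0] at this
      exact this
    -- contradiction
    have hsum : ‖f (y j) - f x‖ ≤ 2 * (n:ℝ) * s := by
      have htri : ‖f (y j) - f x‖ ≤ ‖f (y j) - f x'‖ + ‖f x' - f x‖ := by
        have := dist_triangle (f (y j)) (f x') (f x)
        simpa [dist_eq_norm] using this
      linarith
    have heq : 2 * (n:ℝ) * s = 4 * n * ‖y j - x‖ / q := by rw [hsdef]; ring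
    have heq2 : (4*(n:ℝ)/q + 1) * ‖y j - x‖ = 4 * n * ‖y j - x‖ / q + ‖y j - x‖ := by ring
    have := hy2 j
    rw [heq2] at this
    rw [heq] at hsum
    linarith [hd0 j]

end ZPor1

section ZPor2
variable {X Y : Type*} [NormedAddCommGroup X] [NormedSpace ℝ X]
  [NormedAddCommGroup Y] [NormedSpace ℝ Y]

set_option maxHeartbeats 1000000 in
lemma my_P2porous {f : X → Y} {P : Set X} {K : ℕ} (hK : 1 ≤ K)
    (hP : ∀ x' ∈ P, ∀ y ∈ ball x' (1/(K:ℝ)), ‖f y - f x'‖ ≤ (K:ℝ) * ‖y - x'‖)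
    {x : X} (hx : x ∈ P) {L : X →L[ℝ] Y} {v : X} {ε : ℝ} {τ : ℕ → ℝ} {ζ : ℕ → X}
    (hε : 0 < ε)
    (hτ : ∀ i, 0 < τ i ∧ τ i < 1/((i:ℝ)+1))
    (hζ : ∀ i, ‖ζ i - v‖ < 1/((i:ℝ)+1))
    (hlow : ∀ i, ε ≤ ‖(τ i)⁻¹ • (f (x + τ i • ζ i) - f x) - L v‖)
    (hGv : Tendsto (fun t : ℝ => t⁻¹ • (f (x + t • v) - f x)) (𝓝[≠] (0:ℝ)) (𝓝 (L v))) :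
    ∃ u : X, u ≠ 0 ∧ ∃ p > (0:ℝ), ∃ t : ℕ → ℝ, (∀ i, 0 < t i) ∧
      Tendsto t atTop (𝓝 (0:ℝ)) ∧ ∀ i, ball (x + t i • u) (p * t i) ∩ P = ∅ := by
  have hK0 : (0:ℝ) < K := by exact_mod_cast hK
  -- v ≠ 0
  have hv0 : v ≠ 0 := by
    intro hv
    subst hv
    obtain ⟨i, hi⟩ := exists_nat_gt (max (2*K/ε) (K:ℝ))
    have hi1 : 2*K/ε < (i:ℝ)+1 := by
      have := (le_max_left (2*K/ε) (K:ℝ)).trans_lt hi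
      linarith
    have hi2 : (K:ℝ) < (i:ℝ)+1 := by
      have := (le_max_right (2*K/ε) (K:ℝ)).trans_lt hi
      linarith
    have hζi : ‖ζ i‖ < 1/((i:ℝ)+1) := by simpa using hζ i
    have hτi := hτ i
    have hip : (0:ℝ) < (i:ℝ)+1 := by positivity
    -- the point is in the Lipschitz ball
    have hmem : x + τ i • ζ i ∈ ball x (1/(K:ℝ)) := by
      rw [mem_ball, dist_eq_norm, add_sub_cancel_left, norm_smul, Real.norm_eq_abs,
        abs_of_pos hτi.1]
      have h1 : τ i * ‖ζ i‖ < (1/((i:ℝ)+1)) * (1/((i:ℝ)+1)) := by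
        apply mul_lt_mul' hτi.2.le hζi (norm_nonneg _) (by positivity)
      have h2 : (1/((i:ℝ)+1)) * (1/((i:ℝ)+1)) ≤ 1/((i:ℝ)+1) * 1 := by
        apply mul_le_mul_of_nonneg_left _ (by positivity)
        rw [div_le_one hip]; linarith
      have h3 : 1/((i:ℝ)+1) < 1/(K:ℝ) := by
        apply one_div_lt_one_div_of_lt hK0 hi2
      linarith
    have hlip := hP x hx _ hmem
    rw [add_sub_cancel_left, norm_smul, Real.norm_eq_abs, abs_of_pos hτi.1] at hlip
    have hquot := hlow i
    rw [map_zero, sub_zero, norm_smul, Real.norm_eq_abs, abs_inv, abs_of_pos hτi.1] at hquot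
    -- ε ≤ τ⁻¹ ‖f ξ - f x‖ ≤ K ‖ζ i‖ < ε
    have h4 : (τ i)⁻¹ * ‖f (x + τ i • ζ i) - f x‖ ≤ (τ i)⁻¹ * ((K:ℝ) * (τ i * ‖ζ i‖)) :=
      mul_le_mul_of_nonneg_left hlip (inv_nonneg.mpr hτi.1.le)
    have h5 : (τ i)⁻¹ * ((K:ℝ) * (τ i * ‖ζ i‖)) = (K:ℝ) * ‖ζ i‖ := by
      field_simp [ne_of_gt hτi.1]
    have h6 : (K:ℝ) * ‖ζ i‖ < (K:ℝ) * (1/((i:ℝ)+1)) :=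
      mul_lt_mul_of_pos_left hζi hK0
    have h7 : (K:ℝ) * (1/((i:ℝ)+1)) < ε := by
      rw [mul_one_div, div_lt_iff₀ hip]
      rw [div_lt_iff₀ hε] at hi1
      nlinarith
    linarith
  -- quantitative Gateaux bound along v
  rw [Metric.tendsto_nhds] at hGv
  have hG2 := hGv (ε/2) (by positivity)
  rw [eventually_nhdsWithin_iff, Metric.eventually_nhds_iff] at hG2
  obtain ⟨δ₁, hδ₁0, hδ₁⟩ := hG2
  set p : ℝ := ε/(8*K) with hpdef
  have hp0 : 0 < p := by positivity
  -- pick the tail index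
  obtain ⟨N, hN⟩ := exists_nat_gt (max (1/δ₁) (max (1/p) ((K:ℝ)*(2*p+1))))
  have hNδ : 1/δ₁ < (N:ℝ) := (le_max_left _ _).trans_lt hN
  have hNp : 1/p < (N:ℝ) := ((le_max_left _ _).trans (le_max_right _ _)).trans_lt hN
  have hNK : (K:ℝ)*(2*p+1) < (N:ℝ) := ((le_max_right _ _).trans (le_max_right _ _)).trans_lt hN
  refine ⟨v, hv0, p, hp0, fun i => τ (N+i), fun i => (hτ (N+i)).1, ?_, ?_⟩
  · apply tendsto_of_tendsto_of_tendsto_of_le_of_le (g := fun _ : ℕ => (0:ℝ))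
      (h := fun i : ℕ => 1/((i:ℝ)+1)) tendsto_const_nhds
      tendsto_one_div_add_atTop_nhds_zero_nat
    · exact fun i => (hτ (N+i)).1.le
    · intro i
      have h1 := (hτ (N+i)).2
      have hc : (((N+i : ℕ)):ℝ) = (N:ℝ) + (i:ℝ) := by push_cast; ring
      rw [hc] at h1
      have h2 : 1/((N:ℝ)+(i:ℝ)+1) ≤ 1/((i:ℝ)+1) := by
        apply one_div_le_one_div_of_le (by positivity)
        linarith [Nat.cast_nonneg (α := ℝ) N]
      linarith
  · intro i
    rw [eq_empty_iff_forall_notMem]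
    rintro x' ⟨hx'b, hx'P⟩
    set j : ℕ := N + i with hjdef
    set T : ℝ := τ j with hTdef
    have hT0 : 0 < T := (hτ j).1
    have hNpos : (0:ℝ) < (N:ℝ) := lt_of_le_of_lt (by positivity) hNδ
    have hTsmall : T < 1/(N:ℝ) := by
      have h1 := (hτ j).2
      have hc : ((j:ℕ):ℝ) = (N:ℝ) + (i:ℝ) := by rw [hjdef]; push_cast; ring
      rw [hc] at h1
      have h2 : 1/((N:ℝ)+(i:ℝ)+1) ≤ 1/(N:ℝ) := by
        apply one_div_le_one_div_of_le hNpos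
        linarith [Nat.cast_nonneg (α := ℝ) i]
      linarith
    have hT1 : T < δ₁ := by
      have h := one_div_lt_one_div_of_lt (show (0:ℝ) < 1/δ₁ by positivity) hNδ
      rw [one_div_one_div] at h
      linarith
    have hNp' : 1/(N:ℝ) < p := by
      have h := one_div_lt_one_div_of_lt (show (0:ℝ) < 1/p by positivity) hNp
      rw [one_div_one_div] at h
      exact h
    have hζp : ‖ζ j - v‖ < p := by
      have h1 := hζ j
      have hc : ((j:ℕ):ℝ) = (N:ℝ) + (i:ℝ) := by rw [hjdef]; push_cast; ring
      rw [hc] at h1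
      have h2 : 1/((N:ℝ)+(i:ℝ)+1) ≤ 1/(N:ℝ) := by
        apply one_div_le_one_div_of_le hNpos
        linarith [Nat.cast_nonneg (α := ℝ) i]
      linarith
    have hTN : T * (N:ℝ) < 1 := by
      have h := mul_lt_mul_of_pos_right hTsmall hNpos
      rwa [one_div, inv_mul_cancel₀ (ne_of_gt hNpos)] at h
    have hTK : T * ((K:ℝ)*(2*p+1)) < 1 := by
      have h1 : T * ((K:ℝ)*(2*p+1)) ≤ T * (N:ℝ) :=
        mul_le_mul_of_nonneg_left hNK.le hT0.le
      linarith
    have hpT1K : p * T < 1/(K:ℝ) := by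
      rw [lt_div_iff₀ hK0]
      nlinarith [hp0, hT0, hK0]
    have h2pT1K : 2*p*T < 1/(K:ℝ) := by
      rw [lt_div_iff₀ hK0]
      nlinarith [hp0, hT0, hK0]
    -- the two points
    have hηx' : ‖(x + T • v) - x'‖ < p * T := by
      rw [mem_ball, dist_eq_norm] at hx'b
      rw [norm_sub_rev]
      exact hx'b
    have hξη : ‖(x + T • ζ j) - (x + T • v)‖ ≤ p * T := by
      have h1 : (x + T • ζ j) - (x + T • v) = T • (ζ j - v) := by
        rw [smul_sub]; abel
      rw [h1, norm_smul, Real.norm_eq_abs, abs_of_pos hT0]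
      calc T * ‖ζ j - v‖ ≤ T * p := mul_le_mul_of_nonneg_left hζp.le hT0.le
        _ = p * T := mul_comm _ _
    have hξx' : ‖(x + T • ζ j) - x'‖ < 2*p*T := by
      calc ‖(x + T • ζ j) - x'‖
          ≤ ‖(x + T • ζ j) - (x + T • v)‖ + ‖(x + T • v) - x'‖ := by
            have := dist_triangle (x + T • ζ j) (x + T • v) x'
            simpa [dist_eq_norm] using this
        _ < p * T + p * T := by linarith
        _ = 2*p*T := by ring
    have hfη : ‖f (x + T • v) - f x'‖ ≤ (K:ℝ) * (p * T) := by
      have hm : (x + T • v) ∈ ball x' (1/(K:ℝ)) := by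
        rw [mem_ball, dist_eq_norm]
        linarith
      have := hP x' hx'P _ hm
      calc ‖f (x + T • v) - f x'‖ ≤ (K:ℝ) * ‖(x + T • v) - x'‖ := this
        _ ≤ (K:ℝ) * (p * T) := mul_le_mul_of_nonneg_left hηx'.le hK0.le
    have hfξ : ‖f (x + T • ζ j) - f x'‖ ≤ (K:ℝ) * (2*p*T) := by
      have hm : (x + T • ζ j) ∈ ball x' (1/(K:ℝ)) := by
        rw [mem_ball, dist_eq_norm]
        linarith
      have := hP x' hx'P _ hm
      calc ‖f (x + T • ζ j) - f x'‖ ≤ (K:ℝ) * ‖(x + T • ζ j) - x'‖ := this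
        _ ≤ (K:ℝ) * (2*p*T) := mul_le_mul_of_nonneg_left hξx'.le hK0.le
    -- lower bound
    have hq1 : ε * T ≤ ‖f (x + T • ζ j) - f x - T • (L v)‖ := by
      have h1 := hlow j
      have h2 : T • ((T:ℝ)⁻¹ • (f (x + T • ζ j) - f x) - L v)
          = f (x + T • ζ j) - f x - T • (L v) := by
        rw [smul_sub, smul_inv_smul₀ (ne_of_gt hT0)]
      have h3 : ‖T • ((T:ℝ)⁻¹ • (f (x + T • ζ j) - f x) - L v)‖
          = T * ‖(T:ℝ)⁻¹ • (f (x + T • ζ j) - f x) - L v‖ := by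
        rw [norm_smul, Real.norm_eq_abs, abs_of_pos hT0]
      rw [← h2, h3]
      calc ε * T = T * ε := mul_comm _ _
        _ ≤ T * ‖(T:ℝ)⁻¹ • (f (x + T • ζ j) - f x) - L v‖ :=
          mul_le_mul_of_nonneg_left h1 hT0.le
    have hq2 : ‖f (x + T • v) - f x - T • (L v)‖ ≤ ε/2 * T := by
      have h1 := hδ₁ (y := T) (by rw [Real.dist_eq, sub_zero, abs_of_pos hT0]; exact hT1)
        (by simpa using (ne_of_gt hT0))
      rw [dist_eq_norm] at h1
      have h2 : T • ((T:ℝ)⁻¹ • (f (x + T • v) - f x) - L v)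
          = f (x + T • v) - f x - T • (L v) := by
        rw [smul_sub, smul_inv_smul₀ (ne_of_gt hT0)]
      have h3 : ‖T • ((T:ℝ)⁻¹ • (f (x + T • v) - f x) - L v)‖
          = T * ‖(T:ℝ)⁻¹ • (f (x + T • v) - f x) - L v‖ := by
        rw [norm_smul, Real.norm_eq_abs, abs_of_pos hT0]
      rw [← h2, h3]
      calc T * ‖(T:ℝ)⁻¹ • (f (x + T • v) - f x) - L v‖ ≤ T * (ε/2) :=
            mul_le_mul_of_nonneg_left h1.le hT0.le
        _ = ε/2 * T := mul_comm _ _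
    -- combine
    have hlower : ε/2 * T ≤ ‖f (x + T • ζ j) - f (x + T • v)‖ := by
      have h1 : ‖(f (x + T • ζ j) - f x - T • (L v)) - (f (x + T • v) - f x - T • (L v))‖
          ≥ ‖f (x + T • ζ j) - f x - T • (L v)‖ - ‖f (x + T • v) - f x - T • (L v)‖ :=
        norm_sub_norm_le _ _
      have h2 : (f (x + T • ζ j) - f x - T • (L v)) - (f (x + T • v) - f x - T • (L v))
          = f (x + T • ζ j) - f (x + T • v) := by abel
      rw [h2] at h1
      linarith
    have hupper : ‖f (x + T • ζ j) - f (x + T • v)‖ ≤ 3*(K:ℝ)*p*T := by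
      calc ‖f (x + T • ζ j) - f (x + T • v)‖
          ≤ ‖f (x + T • ζ j) - f x'‖ + ‖f x' - f (x + T • v)‖ := by
            have := dist_triangle (f (x + T • ζ j)) (f x') (f (x + T • v))
            simpa [dist_eq_norm] using this
        _ ≤ (K:ℝ) * (2*p*T) + (K:ℝ) * (p * T) := by
            rw [norm_sub_rev (f x')]
            linarith
        _ = 3*(K:ℝ)*p*T := by ring
    have hKp : (K:ℝ) * p = ε/8 := by
      rw [hpdef]
      field_simp
    have h3kp : 3*(K:ℝ)*p*T = 3*(ε/8)*T := by
      rw [show 3*(K:ℝ)*p*T = 3*((K:ℝ)*p)*T by ring, hKp]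
    rw [h3kp] at hupper
    have hcontr : ε/2 * T ≤ 3*(ε/8)*T := hlower.trans hupper
    have hεT : 0 < ε * T := mul_pos hε hT0
    nlinarith [hεT, hcontr]

end ZPor2


theorem stmt15 {X Y : Type*} [NormedAddCommGroup X] [NormedSpace ℝ X] [CompleteSpace X]
    [TopologicalSpace.SeparableSpace X]
    [MeasurableSpace X] [BorelSpace X]
    [NormedAddCommGroup Y] [NormedSpace ℝ Y] [CompleteSpace Y]
    [MeasurableSpace Y] [BorelSpace Y]
    (G : Set X) (hG : IsOpen G) (f : X → Y) (hmeas : Measurable f)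
    (hline : ∀ a v : X, v ≠ 0 →
      ContinuousOn (fun t : ℝ => f (a + t • v)) {t : ℝ | a + t • v ∈ G}) :
    SigmaDirPorous {x ∈ G | (∃ L : X →L[ℝ] Y, GateauxDiffAt f x L) ∧
      ¬ (∃ L : X →L[ℝ] Y, HadamardDiffAt f x L)} := by
  classical
  rcases subsingleton_or_nontrivial X with hXsub | hXnt
  · -- trivial space : the set is empty
    refine ⟨fun _ => (∅ : Set X), ?_, fun n x hx => absurd hx (notMem_empty x)⟩
    rw [iUnion_const, eq_empty_iff_forall_notMem]
    rintro x ⟨hxG, ⟨L, hL⟩, hnot⟩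
    apply hnot
    refine ⟨0, fun v => ?_⟩
    have hfun : (fun p : ℝ × X => p.1⁻¹ • (f (x + p.1 • p.2) - f x)) = fun _ => (0:Y) := by
      funext p
      rw [Subsingleton.elim (x + p.1 • p.2) x]
      simp
    unfold HadamardDerivAt
    rw [hfun]
    simpa using (tendsto_const_nhds :
      Tendsto (fun _ : ℝ × X => (0:Y)) ((𝓝[≠] (0:ℝ)) ×ˢ 𝓝 v) (𝓝 0))
  -- main case
  set A : Set X := {x ∈ G | (∃ L : X →L[ℝ] Y, GateauxDiffAt f x L) ∧
      ¬ (∃ L : X →L[ℝ] Y, HadamardDiffAt f x L)} with hA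
  set w : ℕ → X := TopologicalSpace.denseSeq X with hwseq
  set P1 : ℕ × ℕ × ℚ → Set X := fun c =>
    {x | x ∈ A ∧ 1 ≤ c.1 ∧ 0 < c.2.2 ∧ w c.2.1 ≠ 0 ∧
      (∀ z ∈ ball (w c.2.1) ((c.2.2 : ℚ) : ℝ), ∀ t : ℝ, t ≠ 0 → |t| ≤ 1/(c.1:ℝ) →
        ‖f (x + t • z) - f x‖ ≤ (c.1:ℝ) * |t|) ∧
      (∀ ρ : ℝ, 0 < ρ → ∃ y : X, ‖y - x‖ < ρ ∧
        (4*(c.1:ℝ)/((c.2.2 : ℚ):ℝ) + 1) * ‖y - x‖ < ‖f y - f x‖)} with hP1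
  set P2 : ℕ → Set X := fun K =>
    {x | x ∈ A ∧ 1 ≤ K ∧ ∀ y ∈ ball x (1/(K:ℝ)), ‖f y - f x‖ ≤ (K:ℝ) * ‖y - x‖} with hP2
  obtain ⟨enc, hsurj⟩ := exists_surjective_nat ((ℕ × ℕ × ℚ) ⊕ ℕ)
  refine ⟨fun i => Sum.elim P1 P2 (enc i), ?_, ?_⟩
  · -- coverage
    apply Subset.antisymm
    · intro x hxA
      have hxA' : x ∈ A := hxA
      obtain ⟨hxG, ⟨L, hL⟩, hnH⟩ := hxA'
      by_cases hlip : LipschitzAtPt f x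
      · obtain ⟨K₀, hK₀, δ, hδ, hlipb⟩ := hlip
        obtain ⟨K, hKgt⟩ := exists_nat_gt (max K₀ (1/δ))
        have hKK₀ : K₀ < (K:ℝ) := (le_max_left _ _).trans_lt hKgt
        have hKδ : 1/δ < (K:ℝ) := (le_max_right _ _).trans_lt hKgt
        have hK0R : (0:ℝ) < (K:ℝ) := lt_trans hK₀ hKK₀
        have hK1 : 1 ≤ K := by exact_mod_cast Nat.one_le_iff_ne_zero.mpr (by
          intro h
          rw [h] at hK0R
          norm_num at hK0R)
        have hxP2 : x ∈ P2 K := by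
          refine ⟨hxA, hK1, ?_⟩
          intro y hy
          have hyδ : y ∈ ball x δ := by
            rw [mem_ball] at hy ⊢
            have h1 : 1/(K:ℝ) < δ := by
              rw [div_lt_iff₀ hδ] at hKδ
              rw [div_lt_iff₀ hK0R]
              linarith
            linarith
          calc ‖f y - f x‖ ≤ K₀ * ‖y - x‖ := hlipb y hyδ
            _ ≤ (K:ℝ) * ‖y - x‖ := mul_le_mul_of_nonneg_right hKK₀.le (norm_nonneg _)
        obtain ⟨i, hi⟩ := hsurj (Sum.inr K)
        refine mem_iUnion.mpr ⟨i, ?_⟩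
        rw [hi]
        exact hxP2
      · obtain ⟨m, hm1, k, hk0, q, hq0, hctrl⟩ := my_fullball hG hmeas hline hxG hL
        rw [LipschitzAtPt] at hlip
        push_neg at hlip
        have hq0R : (0:ℝ) < ((q : ℚ):ℝ) := by exact_mod_cast hq0
        have hbad : ∀ ρ : ℝ, 0 < ρ → ∃ y : X, ‖y - x‖ < ρ ∧
            (4*(m:ℝ)/((q : ℚ):ℝ) + 1) * ‖y - x‖ < ‖f y - f x‖ := by
          intro ρ hρ
          have hm0R : (0:ℝ) < (m:ℝ) := by exact_mod_cast hm1
          obtain ⟨y, hy1, hy2⟩ := hlip (4*(m:ℝ)/((q : ℚ):ℝ) + 1) (by positivity) ρ hρ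
          refine ⟨y, ?_, hy2⟩
          rwa [mem_ball, dist_eq_norm] at hy1
        have hxP1 : x ∈ P1 (m, k, q) := ⟨hxA, hm1, hq0, hk0, hctrl, hbad⟩
        obtain ⟨i, hi⟩ := hsurj (Sum.inl (m, k, q))
        refine mem_iUnion.mpr ⟨i, ?_⟩
        rw [hi]
        exact hxP1
    · apply iUnion_subset
      intro i x hx
      have hx' : x ∈ Sum.elim P1 P2 (enc i) := hx
      rcases henc : enc i with c | K
      · rw [henc] at hx'
        exact hx'.1
      · rw [henc] at hx'
        exact hx'.1
  · -- porosity of the pieces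
    intro i x hx
    have hx' : x ∈ Sum.elim P1 P2 (enc i) := hx
    have hred : ∀ s : Set X, Sum.elim P1 P2 (enc i) = s → DirPorousAt s x →
        DirPorousAt ((fun i => Sum.elim P1 P2 (enc i)) i) x := by
      intro s hs h
      show DirPorousAt (Sum.elim P1 P2 (enc i)) x
      rw [hs]
      exact h
    rcases henc : enc i with c | K
    · rw [henc] at hx'
      apply hred (P1 c) (by rw [henc]; rfl)
      obtain ⟨hxA, hm1, hq0, hk0, hctrlx, hbad⟩ := hx'
      have hq0R : (0:ℝ) < ((c.2.2 : ℚ):ℝ) := by exact_mod_cast hq0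
      have hP : ∀ x' ∈ P1 c, ∀ z ∈ ball (w c.2.1) ((c.2.2 : ℚ):ℝ), ∀ t : ℝ, t ≠ 0 →
          |t| ≤ 1/(c.1:ℝ) → ‖f (x' + t • z) - f x'‖ ≤ (c.1:ℝ) * |t| :=
        fun x' hx' => hx'.2.2.2.2.1
      exact my_P1porous hm1 hq0R hk0 hP ⟨hxA, hm1, hq0, hk0, hctrlx, hbad⟩ hbad
    · rw [henc] at hx'
      apply hred (P2 K) (by rw [henc]; rfl)
      obtain ⟨hxA, hK1, hlipK⟩ := hx'
      obtain ⟨hxG, ⟨L, hL⟩, hnH⟩ := hxA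
      have hfail : ∃ v₀ : X, ¬ HadamardDerivAt f x v₀ (L v₀) := by
        by_contra hc
        push_neg at hc
        exact hnH ⟨L, hc⟩
      obtain ⟨v₀, hv₀⟩ := hfail
      obtain ⟨v, hvor, ε, hε, τ, ζ, hτ, hζ, hlow⟩ := my_extract hv₀
      have hP : ∀ x' ∈ P2 K, ∀ y ∈ ball x' (1/(K:ℝ)), ‖f y - f x'‖ ≤ (K:ℝ) * ‖y - x'‖ :=
        fun x' hx' => hx'.2.2
      exact my_P2porous hK1 hP ⟨⟨hxG, ⟨L, hL⟩, hnH⟩, hK1, hlipK⟩ hε hτ hζ hlow (hL v)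
end

section
/- There exists an everywhere differentiable function f : ℝ → ℝ and a closed set F ⊂ ℝ of positive Lebesgue measure with empty interior such that f vanishes on F and f is not Lipschitz at any point of F that is an accumulation point of the complement of F from an adjacent interval endpoint; in particular, the largest open set on which f is locally Lipschitz is ℝ \ F, and F is not σ-porous. -/
open Filter Metric Set Topology MeasureTheory

open scoped ENNReal NNReal

noncomputable section FatCantor

/-- length of stage-`n` intervals -/
def cc (n : ℕ) : ℝ := (1/2)^(n+1) + (1/2)^(2*n+1)
/-- length of the interval removed at stage `n` -/
def ee (n : ℕ) : ℝ := (1/2:ℝ)^(2*n+2)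

lemma cc_pos (n : ℕ) : 0 < cc n := by unfold cc; positivity
lemma ee_pos (n : ℕ) : 0 < ee n := by unfold ee; positivity
lemma cc_eq (n : ℕ) : cc n = 2 * cc (n+1) + ee n := by simp [cc, ee]; ring
lemma ee_le_cc (n : ℕ) : ee n ≤ cc (n+1) := by
  simp only [cc, ee]
  have h1 : (1/2:ℝ)^(2*n+2) ≤ (1/2:ℝ)^(n+2) := by
    apply pow_le_pow_of_le_one (by norm_num) (by norm_num); omega
  have h2 : (0:ℝ) < (1/2)^(2*(n+1)+1) := by positivity
  linarith
lemma cc_succ_lt (n : ℕ) : cc (n+1) < cc n := by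
  have := cc_eq n; have := cc_pos (n+1); have := ee_pos n; linarith
lemma cc_le_one (n : ℕ) : cc n ≤ 1 := by
  induction n with
  | zero => simp [cc]; norm_num
  | succ m ih => have := cc_succ_lt m; linarith
lemma cc_zero : cc 0 = 1 := by norm_num [cc]

/-- left endpoints of stage-`n` intervals -/
def ll : ℕ → ℕ → ℝ
  | 0, _ => 0
  | n+1, k => ll n (k/2) + if k % 2 = 1 then cc (n+1) + ee n else 0

lemma ll_even (n m : ℕ) : ll (n+1) (2*m) = ll n m := by
  simp [ll, Nat.mul_div_cancel_left, Nat.mul_mod_right]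
lemma ll_odd (n m : ℕ) : ll (n+1) (2*m+1) = ll n m + cc (n+1) + ee n := by
  have h1 : (2*m+1) / 2 = m := by omega
  have h2 : (2*m+1) % 2 = 1 := by omega
  simp [ll, h1, h2]; ring

lemma ll_nonneg (n k : ℕ) : 0 ≤ ll n k := by
  induction n generalizing k with
  | zero => simp [ll]
  | succ m ih =>
    have := ih (k/2)
    rcases Nat.even_or_odd k with ⟨j, hj⟩ | ⟨j, hj⟩
    · subst hj; rw [show j+j = 2*j by ring, ll_even]; exact ih j
    · subst hj; rw [ll_odd]; have := cc_pos (m+1); have := ee_pos m; have := ih j; linarith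

lemma ll_add_cc_le_one (n k : ℕ) (hk : k < 2^n) : ll n k + cc n ≤ 1 := by
  induction n generalizing k with
  | zero => interval_cases k <;> simp [ll, cc_zero]
  | succ m ih =>
    have hk2 : k/2 < 2^m := by
      have : k < 2^m * 2 := by rw [← pow_succ]; exact hk
      omega
    have H := ih (k/2) hk2
    have hcc := cc_eq m
    have he := ee_pos m
    have hc := cc_pos (m+1)
    rcases Nat.even_or_odd k with ⟨j, hj⟩ | ⟨j, hj⟩
    · subst hj
      rw [show j+j = 2*j by ring] at *
      rw [ll_even]
      have : (2*j)/2 = j := by omega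
      rw [this] at H; linarith
    · subst hj
      rw [ll_odd]
      have : (2*j+1)/2 = j := by omega
      rw [this] at H; linarith

/-- separation of consecutive stage-`n` intervals -/
lemma ll_consec (n k : ℕ) (hk : k + 1 < 2^n) : ll n k + cc n ≤ ll n (k+1) := by
  induction n generalizing k with
  | zero => simp at hk
  | succ m ih =>
    have he := ee_pos m
    have hc := cc_pos (m+1)
    have hcc := cc_eq m
    rcases Nat.even_or_odd k with ⟨j, hj⟩ | ⟨j, hj⟩
    · subst hj
      rw [show j+j = 2*j by ring, show 2*j+1 = 2*j+1 from rfl, ll_even, ll_odd]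
      linarith
    · subst hj
      have hj2 : j + 1 < 2^m := by
        have : 2*j+1+1 < 2^m*2 := by rw [← pow_succ]; omega
        omega
      have := ih j hj2
      rw [ll_odd, show 2*j+1+1 = 2*(j+1) by ring, ll_even]
      linarith

lemma ll_sep (n j k : ℕ) (hjk : j < k) (hk : k < 2^n) : ll n j + cc n ≤ ll n k := by
  induction k with
  | zero => omega
  | succ m ih =>
    rcases Nat.lt_or_ge j m with h | h
    · have h1 := ih h (by omega)
      have h2 := ll_consec n m (by omega)
      have := cc_pos n
      linarith
    · have : j = m := by omega
      subst this
      exact ll_consec n j hk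

/-- one-step nesting -/
lemma nest_step (n k : ℕ) :
    ll n (k/2) ≤ ll (n+1) k ∧ ll (n+1) k + cc (n+1) ≤ ll n (k/2) + cc n := by
  have he := ee_pos n
  have hc := cc_pos (n+1)
  have hcc := cc_eq n
  rcases Nat.even_or_odd k with ⟨j, hj⟩ | ⟨j, hj⟩
  · subst hj
    rw [show j+j = 2*j by ring, ll_even, show (2*j)/2 = j by omega]
    constructor <;> linarith
  · subst hj
    rw [ll_odd, show (2*j+1)/2 = j by omega]
    constructor <;> linarith

/-- multi-step nesting -/
lemma nest (m n k : ℕ) :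
    ll n (k/2^m) ≤ ll (n+m) k ∧ ll (n+m) k + cc (n+m) ≤ ll n (k/2^m) + cc n := by
  induction m generalizing k with
  | zero => simp
  | succ p ihp =>
    have h1 := nest_step (n+p) k
    have h2 := ihp (k/2)
    have hd : k/2/2^p = k/2^(p+1) := by
      rw [Nat.div_div_eq_div_mul, ← pow_succ']
    rw [hd] at h2
    exact ⟨le_trans h2.1 h1.1, le_trans h1.2 h2.2⟩

/-- removed open interval at stage `n`, position `k` -/
def aa (n k : ℕ) : ℝ := ll n k + cc (n+1)
def bb (n k : ℕ) : ℝ := aa n k + ee n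

lemma bb_eq (n k : ℕ) : bb n k = ll n k + cc n - cc (n+1) := by
  have := cc_eq n; simp [bb, aa]; linarith

def II (p : ℕ × ℕ) : Set ℝ :=
  if p.2 < 2^p.1 then Set.Ioo (aa p.1 p.2) (bb p.1 p.2) else ∅

def GG : Set ℝ := ⋃ p, II p
def FF : Set ℝ := Set.Icc 0 1 \ GG

lemma mem_II_lt {n k : ℕ} {x : ℝ} (h : x ∈ II (n,k)) :
    k < 2^n ∧ ll n k + cc (n+1) < x ∧ x < ll n k + cc n - cc (n+1) := by
  by_cases hk : k < 2^n
  · simp only [II, hk, if_true] at h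
    exact ⟨hk, by simpa [aa] using h.1, by rw [← bb_eq]; exact h.2⟩
  · simp [II, hk] at h

lemma mem_S_of_mem_II {n' k' : ℕ} {x : ℝ} (h : x ∈ II (n',k')) (n : ℕ) (hn : n ≤ n') :
    ll n (k'/2^(n'-n)) ≤ x ∧ x ≤ ll n (k'/2^(n'-n)) + cc n := by
  obtain ⟨hk, h1, h2⟩ := mem_II_lt h
  have hc := cc_pos (n'+1)
  have hS : ll n' k' ≤ x ∧ x ≤ ll n' k' + cc n' := ⟨by linarith, by linarith⟩
  have hnest := nest (n'-n) n k'
  rw [show n + (n'-n) = n' by omega] at hnest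
  exact ⟨le_trans hnest.1 hS.1, le_trans hS.2 hnest.2⟩

lemma mem_II_unique_aux {n k n' k' : ℕ} {x : ℝ} (hn : n ≤ n')
    (hp : x ∈ II (n,k)) (hq : x ∈ II (n',k')) : n = n' ∧ k = k' := by
  obtain ⟨hk2, ha, hb⟩ := mem_II_lt hp
  obtain ⟨hk2', ha', hb'⟩ := mem_II_lt hq
  have hcn := cc_pos n
  have hcn1 := cc_pos (n+1)
  rcases eq_or_lt_of_le hn with heq | hlt
  · subst heq
    refine ⟨rfl, ?_⟩
    rcases lt_trichotomy k k' with h | h | h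
    · exfalso
      have := ll_sep n k k' h hk2'
      linarith
    · exact h
    · exfalso
      have := ll_sep n k' k h hk2
      linarith
  · exfalso
    -- x lies in stage-(n+1) interval j, j = ancestor of k' at level n+1
    set j := k'/2^(n'-(n+1)) with hj
    have hSj : ll (n+1) j ≤ x ∧ x ≤ ll (n+1) j + cc (n+1) :=
      mem_S_of_mem_II hq (n+1) (by omega)
    set kt := k'/2^(n'-n) with hkt
    have hjk : j/2 = kt := by
      have h2 : 2^(n'-(n+1)) * 2 = 2^(n'-n) := by
        rw [← pow_succ]
        congr 1
        omega
      rw [hj, hkt, Nat.div_div_eq_div_mul, h2]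
    have hktlt : kt < 2^n := by
      rw [hkt]
      apply Nat.div_lt_of_lt_mul
      have h2 : 2^(n'-n) * 2^n = 2^n' := by
        rw [← pow_add]
        congr 1
        omega
      rw [h2]
      exact hk2'
    by_cases hkk : kt = k
    · -- D4: x in child of the parent of II(n,k): contradiction
      subst hkk
      rcases Nat.even_or_odd j with ⟨i, hi⟩ | ⟨i, hi⟩
      · have hieq : i = kt := by omega
        rw [hi, show i+i = 2*i by ring, ll_even, hieq] at hSj
        linarith [hSj.2]
      · have hieq : i = kt := by omega
        rw [hi, ll_odd, hieq] at hSj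
        have := ee_pos n
        have := cc_eq n
        linarith [hSj.1]
    · -- different stage-n intervals
      have hSkt : ll n kt ≤ x ∧ x ≤ ll n kt + cc n := by
        have := mem_S_of_mem_II hq n (le_of_lt hlt)
        rwa [← hkt] at this
      rcases lt_trichotomy k kt with h | h | h
      · have := ll_sep n k kt h hktlt
        linarith [hSkt.1]
      · exact hkk h.symm
      · have := ll_sep n kt k h hk2
        linarith [hSkt.2]

lemma mem_II_unique {p q : ℕ×ℕ} {x : ℝ} (hp : x ∈ II p) (hq : x ∈ II q) : p = q := by
  rcases le_total p.1 q.1 with h | h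
  · obtain ⟨h1, h2⟩ := mem_II_unique_aux h hp hq
    exact Prod.ext h1 h2
  · obtain ⟨h1, h2⟩ := mem_II_unique_aux h hq hp
    exact (Prod.ext h1 h2).symm

lemma II_subset_stage {n k : ℕ} (hk : k < 2^n) :
    II (n,k) ⊆ Set.Ioo (ll n k) (ll n k + cc n) := by
  intro x hx
  obtain ⟨_, h1, h2⟩ := mem_II_lt hx
  have := cc_pos (n+1)
  exact ⟨by linarith, by linarith⟩

lemma II_subset_Ioo01 (p : ℕ×ℕ) : II p ⊆ Set.Ioo 0 1 := by
  rcases p with ⟨n, k⟩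
  intro x hx
  obtain ⟨hk, h1, h2⟩ := mem_II_lt hx
  have h3 := ll_nonneg n k
  have h4 := ll_add_cc_le_one n k hk
  have := cc_pos (n+1)
  exact ⟨by linarith, by linarith⟩

lemma GG_open : IsOpen GG := by
  apply isOpen_iUnion
  intro p
  unfold II
  split
  · exact isOpen_Ioo
  · exact isOpen_empty

lemma FF_closed : IsClosed FF :=
  isClosed_Icc.inter GG_open.isClosed_compl

lemma mem_II_mid {n k : ℕ} (hk : k < 2^n) : aa n k + ee n / 2 ∈ II (n,k) := by
  have := ee_pos n
  simp only [II, hk, if_true, bb]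
  exact ⟨by linarith, by linarith⟩

lemma FF_subset_S (n : ℕ) {x : ℝ} (hx : x ∈ FF) :
    ∃ k < 2^n, ll n k ≤ x ∧ x ≤ ll n k + cc n := by
  induction n with
  | zero =>
    refine ⟨0, by norm_num, ?_, ?_⟩
    · simpa [ll] using hx.1.1
    · simp only [ll, cc_zero, zero_add]; exact hx.1.2
  | succ m ih =>
    obtain ⟨k, hk, h1, h2⟩ := ih
    have hnotin : x ∉ II (m,k) := fun h => hx.2 (Set.mem_iUnion.2 ⟨(m,k), h⟩)
    simp only [II, hk, if_true, Set.mem_Ioo, not_and_or, not_lt] at hnotin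
    have hcc := cc_eq m
    have hee := ee_pos m
    rcases hnotin with h | h
    · exact ⟨2*k, by omega, by rw [ll_even]; exact h1,
        by rw [ll_even]; simpa [aa] using h⟩
    · refine ⟨2*k+1, by omega, ?_, ?_⟩
      · rw [ll_odd]; have := bb_eq m k; linarith
      · rw [ll_odd]; linarith

lemma cc_le_pow (n : ℕ) : cc n ≤ (1/2:ℝ)^n := by
  unfold cc
  have h1 : (1/2:ℝ)^(2*n+1) ≤ (1/2:ℝ)^(n+1) := by
    apply pow_le_pow_of_le_one (by norm_num) (by norm_num); omega
  have h2 : (1/2:ℝ)^(n+1) + (1/2:ℝ)^(n+1) = (1/2:ℝ)^n := by ring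
  linarith

lemma FF_interior : interior FF = ∅ := by
  by_contra h
  obtain ⟨x, hx⟩ := Set.nonempty_iff_ne_empty.2 h
  obtain ⟨ε, hε, hball⟩ := Metric.isOpen_iff.1 isOpen_interior x hx
  have hxF : x ∈ FF := interior_subset hx
  obtain ⟨n, hn⟩ := exists_pow_lt_of_lt_one hε (by norm_num : (1/2:ℝ) < 1)
  obtain ⟨k, hk, h1, h2⟩ := FF_subset_S n hxF
  set y := aa n k + ee n / 2 with hy
  have hyI : y ∈ II (n,k) := mem_II_mid hk
  have hyS := II_subset_stage hk hyI
  have : y ∈ Metric.ball x ε := by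
    rw [Metric.mem_ball, Real.dist_eq, abs_lt]
    have := cc_le_pow n
    constructor <;> linarith [hyS.1, hyS.2]
  have := interior_subset (hball this)
  exact this.2 (Set.mem_iUnion.2 ⟨(n,k), hyI⟩)

lemma volume_GG_le : volume GG ≤ 1/2 := by
  have h1 : volume GG ≤ ∑' p : ℕ×ℕ, volume (II p) := measure_iUnion_le II
  have h2 : ∀ p : ℕ×ℕ, volume (II p) = if p.2 < 2^p.1 then ENNReal.ofReal (ee p.1) else 0 := by
    intro ⟨n, k⟩
    simp only [II]
    split
    · rw [Real.volume_Ioo]; congr 1; simp [bb]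
    · simp
  calc volume GG ≤ ∑' p : ℕ×ℕ, volume (II p) := h1
    _ = ∑' n : ℕ, ∑' k : ℕ, volume (II (n,k)) := ENNReal.tsum_prod (f := fun n k => volume (II (n,k)))
    _ = ∑' n : ℕ, ∑' k : ℕ, (if k < 2^n then ENNReal.ofReal (ee n) else 0) := by
        exact tsum_congr fun n => tsum_congr fun k => h2 (n,k)
    _ = ∑' n : ℕ, (2^n : ℝ≥0∞) * ENNReal.ofReal (ee n) := by
        refine tsum_congr fun n => ?_
        rw [tsum_eq_sum (s := Finset.range (2^n)) (by intro b hb; simp [Finset.mem_range] at hb; simp [hb])]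
        simp [Finset.sum_ite_of_true, Finset.mem_range]
    _ = ∑' n : ℕ, ENNReal.ofReal (1/4) * (ENNReal.ofReal (1/2))^n := by
        refine tsum_congr fun n => ?_
        have h3 : (2:ℝ≥0∞)^n = ENNReal.ofReal (2^n) := by
          rw [ENNReal.ofReal_pow (by norm_num)]
          norm_num [ENNReal.ofReal_ofNat]
        rw [h3, ← ENNReal.ofReal_pow (by norm_num), ← ENNReal.ofReal_mul (by positivity),
          ← ENNReal.ofReal_mul (by positivity)]
        congr 1
        have h4 : (2:ℝ)^n * (1/2)^n = 1 := by
          rw [← mul_pow]; norm_num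
        have h5 : ee n = (1/2:ℝ)^n * ((1/2)^n * (1/4)) := by
          unfold ee
          rw [show 2*n+2 = n+(n+2) by ring, pow_add, show n+2 = n+2 from rfl, pow_add]
          norm_num
        rw [h5]
        linear_combination ((1/2:ℝ)^n * (1/4)) * h4
    _ = ENNReal.ofReal (1/4) * (1 - ENNReal.ofReal (1/2))⁻¹ := by
        rw [ENNReal.tsum_mul_left, ENNReal.tsum_geometric]
    _ = 1/2 := by
        have ha : ENNReal.ofReal (1/2) = 2⁻¹ := by
          rw [one_div, ENNReal.ofReal_inv_of_pos (by norm_num)]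
          norm_num [ENNReal.ofReal_ofNat]
        have hb : ENNReal.ofReal (1/4) = 4⁻¹ := by
          rw [one_div, ENNReal.ofReal_inv_of_pos (by norm_num)]
          norm_num [ENNReal.ofReal_ofNat]
        rw [ha, hb]
        have hc : (1:ℝ≥0∞) - 2⁻¹ = 2⁻¹ :=
          ENNReal.sub_eq_of_eq_add (by norm_num) (ENNReal.inv_two_add_inv_two.symm)
        rw [hc, inv_inv, one_div]
        rw [show (4:ℝ≥0∞) = 2*2 by norm_num, ENNReal.mul_inv (by norm_num) (by norm_num)]
        rw [mul_assoc, ENNReal.inv_mul_cancel (by norm_num) (by norm_num), mul_one]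

lemma volume_FF : 1/2 ≤ volume FF := by
  have hsub : Set.Icc (0:ℝ) 1 ⊆ FF ∪ GG := fun x hx => by
    by_cases h : x ∈ GG
    · exact Or.inr h
    · exact Or.inl ⟨hx, h⟩
  have h1 : (1:ℝ≥0∞) ≤ volume FF + volume GG := by
    calc (1:ℝ≥0∞) = volume (Set.Icc (0:ℝ) 1) := by simp
    _ ≤ volume (FF ∪ GG) := measure_mono hsub
    _ ≤ volume FF + volume GG := measure_union_le _ _
  have h2 := volume_GG_le
  by_contra hlt
  have hlt' : volume FF < 1/2 := lt_of_not_ge hlt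
  have : volume FF + volume GG < 1 := by
    calc volume FF + volume GG ≤ volume FF + 1/2 := add_le_add le_rfl h2
    _ < 1/2 + 1/2 := ENNReal.add_lt_add_right (by norm_num) hlt'
    _ = 1 := by rw [one_div, ENNReal.inv_two_add_inv_two]
  exact absurd h1 (not_le.2 this)

/-! ### The function -/

/-- oscillating profile -/
def gg (t : ℝ) : ℝ := t^2 * Real.sin ((t^2)⁻¹)

/-- smooth weight on the interval `II p` -/
def uu (p : ℕ × ℕ) (x : ℝ) : ℝ := (x - aa p.1 p.2) * (bb p.1 p.2 - x)

/-- the function -/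
def ff (x : ℝ) : ℝ := ∑' p : ℕ×ℕ, Set.indicator (II p) (fun y => gg (uu p y)) x

lemma II_open (p : ℕ×ℕ) : IsOpen (II p) := by
  unfold II
  split
  · exact isOpen_Ioo
  · exact isOpen_empty

lemma mem_II_iff {p : ℕ×ℕ} {x : ℝ} (hk : p.2 < 2^p.1) :
    x ∈ II p ↔ aa p.1 p.2 < x ∧ x < bb p.1 p.2 := by
  simp [II, hk, Set.mem_Ioo]

lemma uu_pos {p : ℕ×ℕ} {x : ℝ} (hx : x ∈ II p) : 0 < uu p x := by
  rcases p with ⟨n, k⟩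
  obtain ⟨hk, -, -⟩ := mem_II_lt hx
  rw [mem_II_iff hk] at hx
  have h1 : 0 < x - aa n k := by simp only at hx ⊢; linarith [hx.1]
  have h2 : 0 < bb n k - x := by simp only at hx ⊢; linarith [hx.2]
  exact mul_pos h1 h2

lemma ff_eq_on_II {p : ℕ×ℕ} {x : ℝ} (hx : x ∈ II p) : ff x = gg (uu p x) := by
  unfold ff
  rw [tsum_eq_single p]
  · exact Set.indicator_of_mem hx _
  · intro q hq
    apply Set.indicator_of_notMem
    intro hxq
    exact hq (mem_II_unique hxq hx)

lemma ff_eq_zero {x : ℝ} (hx : x ∉ GG) : ff x = 0 := by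
  unfold ff
  have : ∀ p : ℕ×ℕ, Set.indicator (II p) (fun y => gg (uu p y)) x = 0 := by
    intro p
    apply Set.indicator_of_notMem
    exact fun h => hx (Set.mem_iUnion.2 ⟨p, h⟩)
  simp [this]

lemma abs_gg_le (t : ℝ) : |gg t| ≤ t^2 := by
  unfold gg
  rw [abs_mul, abs_of_nonneg (sq_nonneg t)]
  calc t^2 * |Real.sin ((t^2)⁻¹)| ≤ t^2 * 1 :=
    mul_le_mul_of_nonneg_left (Real.abs_sin_le_one _) (sq_nonneg t)
  _ = t^2 := mul_one _

lemma ee_le_one (n : ℕ) : ee n ≤ 1 := by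
  unfold ee
  exact pow_le_one₀ (by norm_num) (by norm_num)

/-- quadratic bound at points outside all intervals -/
lemma abs_ff_le {x y : ℝ} (hx : x ∉ GG) : |ff y| ≤ (y - x)^2 := by
  by_cases hy : y ∈ GG
  · obtain ⟨p, hp⟩ := Set.mem_iUnion.1 hy
    rcases p with ⟨n, k⟩
    rw [ff_eq_on_II hp]
    obtain ⟨hk, -, -⟩ := mem_II_lt hp
    rw [mem_II_iff hk] at hp
    simp only at hp
    have hxI : x ∉ II (n,k) := fun h => hx (Set.mem_iUnion.2 ⟨(n,k), h⟩)
    rw [mem_II_iff hk, not_and_or, not_lt, not_lt] at hxI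
    have hba : bb n k - aa n k = ee n := by simp [bb]
    have hee := ee_pos n
    have hee1 := ee_le_one n
    have hu : 0 ≤ uu (n,k) y ∧ uu (n,k) y ≤ |y - x| := by
      constructor
      · apply le_of_lt; apply uu_pos; rw [mem_II_iff hk]; exact hp
      · unfold uu
        simp only
        rcases hxI with h | h
        · -- x ≤ a : use y - a ≤ y - x and b - y ≤ b - a = e ≤ 1
          rw [abs_of_pos (by linarith [hp.1])]
          nlinarith [hp.1, hp.2]
        · -- b ≤ x
          rw [abs_of_neg (by linarith [hp.2])]
          nlinarith [hp.1, hp.2]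
    calc |gg (uu (n,k) y)| ≤ (uu (n,k) y)^2 := abs_gg_le _
    _ ≤ |y - x|^2 := by nlinarith [hu.1, hu.2]
    _ = (y - x)^2 := sq_abs _
  · rw [ff_eq_zero hy]
    simpa using sq_nonneg (y - x)

/-- `ff` has derivative `0` at points outside all intervals -/
lemma hasDerivAt_ff_zero {x : ℝ} (hx : x ∉ GG) : HasDerivAt ff 0 x := by
  rw [hasDerivAt_iff_isLittleO]
  have h0 : ff x = 0 := ff_eq_zero hx
  rw [Asymptotics.isLittleO_iff]
  intro c hc
  rw [Metric.eventually_nhds_iff]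
  refine ⟨c, hc, fun {y} hy => ?_⟩
  rw [Real.dist_eq] at hy
  have h1 := abs_ff_le (x := x) (y := y) hx
  have : ‖ff y - ff x - (y - x) • (0:ℝ)‖ = |ff y| := by
    rw [h0]; simp
  rw [this]
  calc |ff y| ≤ (y - x)^2 := h1
  _ = |y - x| * |y - x| := by rw [← sq_abs, sq]
  _ ≤ c * |y - x| := mul_le_mul_of_nonneg_right (le_of_lt hy) (abs_nonneg _)
  _ = c * ‖y - x‖ := rfl

lemma hasDerivAt_uu (p : ℕ×ℕ) (x : ℝ) :
    HasDerivAt (uu p) (aa p.1 p.2 + bb p.1 p.2 - 2*x) x := by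
  have h1 : HasDerivAt (fun y : ℝ => (y - aa p.1 p.2) * (bb p.1 p.2 - y))
      (1 * (bb p.1 p.2 - x) + (x - aa p.1 p.2) * (0 - 1)) x :=
    ((hasDerivAt_id x).sub_const _).mul ((hasDerivAt_const x _).sub (hasDerivAt_id x))
  convert h1 using 1
  · rfl
  ring

lemma continuous_uu (p : ℕ×ℕ) : Continuous (uu p) := by
  unfold uu; fun_prop

lemma hasDerivAt_gg {t : ℝ} (ht : t ≠ 0) :
    HasDerivAt gg (2*t*Real.sin ((t^2)⁻¹) - 2/t * Real.cos ((t^2)⁻¹)) t := by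
  have h1 : HasDerivAt (fun s:ℝ => s^2) (2*t) t := by
    simpa using hasDerivAt_pow 2 t
  have ht2 : t^2 ≠ 0 := pow_ne_zero _ ht
  have h2 : HasDerivAt (fun s:ℝ => (s^2)⁻¹) (-(2*t) / (t^2)^2) t := h1.inv ht2
  have h3 : HasDerivAt (fun s:ℝ => Real.sin ((s^2)⁻¹))
      (Real.cos ((t^2)⁻¹) * (-(2*t) / (t^2)^2)) t :=
    (Real.hasDerivAt_sin _).comp t h2
  have h4 := h1.mul h3
  have : gg = fun s : ℝ => s^2 * Real.sin ((s^2)⁻¹) := rfl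
  rw [this]
  have key : 2*t*Real.sin ((t^2)⁻¹) - 2/t * Real.cos ((t^2)⁻¹) = 2*t*Real.sin ((t^2)⁻¹) + t^2 * (Real.cos ((t^2)⁻¹) * (-(2*t) / (t^2)^2)) := by
    field_simp
    ring
  exact h4.congr_deriv key.symm

lemma hasDerivAt_ff_II {p : ℕ×ℕ} {x : ℝ} (hx : x ∈ II p) :
    HasDerivAt ff ((2*(uu p x)*Real.sin (((uu p x)^2)⁻¹)
      - 2/(uu p x) * Real.cos (((uu p x)^2)⁻¹)) * (aa p.1 p.2 + bb p.1 p.2 - 2*x)) x := by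
  have hu := uu_pos hx
  have h1 := (hasDerivAt_gg (ne_of_gt hu)).comp x (hasDerivAt_uu p x)
  apply h1.congr_of_eventuallyEq
  filter_upwards [(II_open p).mem_nhds hx] with y hy
  exact ff_eq_on_II hy

lemma contDiffAt_ff {p : ℕ×ℕ} {x : ℝ} (hx : x ∈ II p) : ContDiffAt ℝ 1 ff x := by
  have hu := uu_pos hx
  have hcu : ContDiffAt ℝ 1 (uu p) x := by
    unfold uu; fun_prop
  have hg : ContDiffAt ℝ 1 gg (uu p x) := by
    have : gg = fun s : ℝ => s^2 * Real.sin ((s^2)⁻¹) := rfl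
    rw [this]
    apply ContDiffAt.mul
    · exact (contDiff_id.pow 2).contDiffAt
    · apply Real.contDiff_sin.contDiffAt.comp
      exact ContDiffAt.inv ((contDiff_id.pow 2).contDiffAt)
        (by positivity : (0:ℝ) < (uu p x)^2).ne'
  have h2 := hg.comp x hcu
  apply h2.congr_of_eventuallyEq
  filter_upwards [(II_open p).mem_nhds hx] with y hy
  exact ff_eq_on_II hy

lemma uu_left (n k : ℕ) : uu (n,k) (aa n k) = 0 := by
  unfold uu; simp

lemma uu_right (n k : ℕ) : uu (n,k) (bb n k) = 0 := by
  unfold uu; simp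

lemma trig_at_u₀ (m : ℕ) (u₀ : ℝ) (hu : u₀^2 = ((m:ℝ) * (2*Real.pi))⁻¹) :
    Real.sin ((u₀^2)⁻¹) = 0 ∧ Real.cos ((u₀^2)⁻¹) = 1 := by
  rw [hu, inv_inv]
  constructor
  · have h : (m:ℝ)*(2*Real.pi) = ((2*m : ℕ):ℝ) * Real.pi := by push_cast; ring
    rw [h]
    exact Real.sin_nat_mul_pi (2*m)
  · exact Real.cos_nat_mul_two_pi m

/-- key small-oscillation parameter -/
lemma exists_u₀ (T : ℝ) (hT : 0 < T) :
    ∃ u₀ : ℝ, 0 < u₀ ∧ u₀ < T ∧ ∃ m : ℕ, u₀^2 = ((m:ℝ) * (2*Real.pi))⁻¹ := by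
  have hπ := Real.pi_pos
  obtain ⟨m, hm⟩ := exists_nat_gt (max 1 ((2 * Real.pi * T^2)⁻¹))
  have hm1 : (1:ℝ) < m := lt_of_le_of_lt (le_max_left _ _) hm
  have hmpos : 0 < (m:ℝ) * (2*Real.pi) := by positivity
  refine ⟨Real.sqrt (((m:ℝ) * (2*Real.pi))⁻¹), Real.sqrt_pos.2 (by positivity), ?_, m, ?_⟩
  · have h1 : ((m:ℝ)*(2*Real.pi))⁻¹ < T^2 := by
      rw [inv_lt_iff_one_lt_mul₀ hmpos]
      have h2 : (2 * Real.pi * T^2)⁻¹ < (m:ℝ) := lt_of_le_of_lt (le_max_right _ _) hm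
      have h3 := (inv_lt_iff_one_lt_mul₀ (by positivity : (0:ℝ) < 2*Real.pi*T^2)).1 h2
      calc (1:ℝ) < ↑m * (2*Real.pi*T^2) := h3
      _ = T^2 * (↑m*(2*Real.pi)) := by ring
    calc Real.sqrt (((m:ℝ) * (2*Real.pi))⁻¹) < Real.sqrt (T^2) :=
      Real.sqrt_lt_sqrt (by positivity) h1
    _ = T := Real.sqrt_sq hT.le
  · exact Real.sq_sqrt (by positivity)

lemma blowup_right {n k : ℕ} (hk : k < 2^n) {c : ℝ} (hc1 : aa n k < c) (hc2 : c ≤ bb n k)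
    (M : ℝ) :
    ∃ z d, aa n k < z ∧ z < c ∧ HasDerivAt ff d z ∧ M < |d| := by
  have he := ee_pos n
  have hba : bb n k - aa n k = ee n := by simp [bb]
  set a := aa n k with ha
  set b := bb n k with hb
  set w := min c (a + ee n / 8) with hw
  have hw1 : a < w := lt_min hc1 (by linarith)
  have hw2 : w ≤ a + ee n / 8 := min_le_right _ _
  have hwb : w < b := by
    have : a + ee n / 8 < b := by linarith
    exact lt_of_le_of_lt hw2 this
  have hwI : w ∈ II (n,k) := (mem_II_iff hk).2 ⟨hw1, hwb⟩
  have huw : 0 < uu (n,k) w := uu_pos hwI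
  set T := min (uu (n,k) w) (ee n / (|M| + 1)) with hT
  have hT0 : 0 < T := lt_min huw (by positivity)
  obtain ⟨u₀, hu₀pos, hu₀T, m, hu₀sq⟩ := exists_u₀ T hT0
  -- IVT to find z with uu z = u₀
  have hcont : ContinuousOn (uu (n,k)) (Set.Icc a w) := (continuous_uu _).continuousOn
  have hiv : u₀ ∈ Set.Ioo (uu (n,k) a) (uu (n,k) w) := by
    rw [uu_left]
    exact ⟨hu₀pos, lt_of_lt_of_le hu₀T (min_le_left _ _)⟩
  obtain ⟨z, hz, hzu⟩ := intermediate_value_Ioo hw1.le hcont hiv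
  have hzI : z ∈ II (n,k) := (mem_II_iff hk).2 ⟨hz.1, lt_trans hz.2 hwb⟩
  have hd := hasDerivAt_ff_II hzI
  rw [hzu] at hd
  obtain ⟨hsin, hcos⟩ := trig_at_u₀ m u₀ hu₀sq
  rw [hsin, hcos] at hd
  refine ⟨z, _, hz.1, lt_of_lt_of_le hz.2 (min_le_left _ _), hd, ?_⟩
  -- derivative size
  have habz : 3 * ee n / 4 ≤ a + b - 2*z := by
    have hz2 : z < a + ee n / 8 := lt_of_lt_of_le hz.2 hw2
    linarith
  have hq : 0 < a + b - 2*z := by linarith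
  have hval : (2*u₀*0 - 2/u₀*1) * (a + b - 2*z) = -(2/u₀ * (a + b - 2*z)) := by ring
  rw [hval, abs_neg, abs_of_pos (mul_pos (by positivity) hq)]
  rw [div_mul_eq_mul_div, lt_div_iff₀ hu₀pos]
  have h1 : u₀ < ee n / (|M|+1) := lt_of_lt_of_le hu₀T (min_le_right _ _)
  have h2 : u₀ * (|M|+1) < ee n := by
    rw [lt_div_iff₀ (by positivity)] at h1
    exact h1
  have hMu : M * u₀ ≤ |M| * u₀ := mul_le_mul_of_nonneg_right (le_abs_self M) hu₀pos.le
  nlinarith [abs_nonneg M]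

lemma blowup_left {n k : ℕ} (hk : k < 2^n) {c : ℝ} (hc1 : aa n k ≤ c) (hc2 : c < bb n k)
    (M : ℝ) :
    ∃ z d, c < z ∧ z < bb n k ∧ HasDerivAt ff d z ∧ M < |d| := by
  have he := ee_pos n
  have hba : bb n k - aa n k = ee n := by simp [bb]
  set a := aa n k with ha
  set b := bb n k with hb
  set w := max c (b - ee n / 8) with hw
  have hw1 : w < b := max_lt hc2 (by linarith)
  have hw2 : b - ee n / 8 ≤ w := le_max_right _ _
  have haw : a < w := by
    have : a < b - ee n / 8 := by linarith
    exact lt_of_lt_of_le this hw2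
  have hwI : w ∈ II (n,k) := (mem_II_iff hk).2 ⟨haw, hw1⟩
  have huw : 0 < uu (n,k) w := uu_pos hwI
  set T := min (uu (n,k) w) (ee n / (|M| + 1)) with hT
  have hT0 : 0 < T := lt_min huw (by positivity)
  obtain ⟨u₀, hu₀pos, hu₀T, m, hu₀sq⟩ := exists_u₀ T hT0
  have hcont : ContinuousOn (uu (n,k)) (Set.Icc w b) := (continuous_uu _).continuousOn
  have hiv : u₀ ∈ Set.Ioo (uu (n,k) b) (uu (n,k) w) := by
    rw [uu_right]
    exact ⟨hu₀pos, lt_of_lt_of_le hu₀T (min_le_left _ _)⟩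
  obtain ⟨z, hz, hzu⟩ := intermediate_value_Ioo' hw1.le hcont hiv
  have hzI : z ∈ II (n,k) := (mem_II_iff hk).2 ⟨lt_trans haw hz.1, hz.2⟩
  have hd := hasDerivAt_ff_II hzI
  rw [hzu] at hd
  obtain ⟨hsin, hcos⟩ := trig_at_u₀ m u₀ hu₀sq
  rw [hsin, hcos] at hd
  refine ⟨z, _, lt_of_le_of_lt (le_max_left c _) hz.1, hz.2, hd, ?_⟩
  have habz : 3 * ee n / 4 ≤ 2*z - a - b := by
    have hz2 : b - ee n / 8 < z := lt_of_le_of_lt hw2 hz.1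
    linarith
  have hq : 0 < 2*z - a - b := by linarith
  have hval : (2*u₀*0 - 2/u₀*1) * (a + b - 2*z) = 2/u₀ * (2*z - a - b) := by ring
  rw [hval, abs_of_pos (mul_pos (by positivity) hq)]
  rw [div_mul_eq_mul_div, lt_div_iff₀ hu₀pos]
  have h1 : u₀ < ee n / (|M|+1) := lt_of_lt_of_le hu₀T (min_le_right _ _)
  have h2 : u₀ * (|M|+1) < ee n := by
    rw [lt_div_iff₀ (by positivity)] at h1
    exact h1
  have hMu : M * u₀ ≤ |M| * u₀ := mul_le_mul_of_nonneg_right (le_abs_self M) hu₀pos.le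
  nlinarith [abs_nonneg M]


lemma porous_volume_zero (S : Set ℝ) (h : ∀ x ∈ S, PorousAt S x) : volume S = 0 := by
  by_contra hS
  have hae := Besicovitch.ae_tendsto_measure_inter_div volume S
  rw [Filter.Eventually] at hae
  -- the set of density points has full restricted measure
  have hSsub : S ⊆ {x | ¬ Tendsto (fun r => volume (S ∩ Metric.closedBall x r) /
      volume (Metric.closedBall x r)) (𝓝[>] 0) (𝓝 1)} := by
    intro x hxS hx
    obtain ⟨p, hp, y, hy_ne, hy_lim, hy_ball⟩ := h x hxS
    -- radii
    set d : ℕ → ℝ := fun n => ‖y n - x‖ with hd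
    have hd_pos : ∀ n, 0 < d n := fun n => by
      simp only [hd, norm_pos_iff, sub_ne_zero]
      exact hy_ne n
    set R : ℕ → ℝ := fun n => (1+p) * d n with hR
    have hR_pos : ∀ n, 0 < R n := fun n => mul_pos (by linarith) (hd_pos n)
    have hR_lim : Tendsto R atTop (𝓝[>] 0) := by
      apply tendsto_nhdsWithin_of_tendsto_nhds_of_eventually_within
      · have h1 : Tendsto d atTop (𝓝 0) := by
          have := (tendsto_iff_norm_sub_tendsto_zero).1 hy_lim
          simpa [hd] using this
        have h2 : Tendsto R atTop (𝓝 ((1+p) * 0)) := h1.const_mul _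
        simpa using h2
      · exact Filter.Eventually.of_forall fun n => hR_pos n
    have key : ∀ n, volume (S ∩ Metric.closedBall x (R n)) / volume (Metric.closedBall x (R n))
        ≤ ENNReal.ofReal (1/(1+p)) := by
      intro n
      have hball_sub : Metric.ball (y n) (p * d n) ⊆ Metric.closedBall x (R n) := by
        intro z hz
        rw [Metric.mem_ball] at hz
        rw [Metric.mem_closedBall]
        have h3 : dist z x ≤ dist z (y n) + dist (y n) x := dist_triangle _ _ _
        have h4 : dist (y n) x = d n := by rw [hd]; simp [dist_eq_norm]
        simp only [hR]
        nlinarith [hz, h3, h4, hd_pos n]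
      have hvol_sub : volume (S ∩ Metric.closedBall x (R n)) ≤
          volume (Metric.closedBall x (R n) \ Metric.ball (y n) (p * d n)) := by
        apply measure_mono
        intro z hz
        refine ⟨hz.2, fun hzb => ?_⟩
        have : z ∈ Metric.ball (y n) (p * d n) ∩ S := ⟨hzb, hz.1⟩
        rw [hy_ball n] at this
        exact this
      have hdiff : volume (Metric.closedBall x (R n) \ Metric.ball (y n) (p * d n)) =
          volume (Metric.closedBall x (R n)) - volume (Metric.ball (y n) (p * d n)) :=
        measure_diff hball_sub measurableSet_ball.nullMeasurableSet
          (ne_of_lt measure_ball_lt_top)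
      rw [Real.volume_closedBall, Real.volume_ball] at hdiff
      have hcalc : ENNReal.ofReal (2 * R n) - ENNReal.ofReal (2 * (p * d n)) =
          ENNReal.ofReal (2 * d n) := by
        rw [← ENNReal.ofReal_sub _ (by positivity)]
        congr 1
        simp only [hR]
        ring
      have hvol2 : volume (S ∩ Metric.closedBall x (R n)) ≤ ENNReal.ofReal (2 * d n) := by
        calc volume (S ∩ Metric.closedBall x (R n)) ≤ _ := hvol_sub
        _ = _ := hdiff
        _ = _ := hcalc
      have hRn := hR_pos n
      have hdn := hd_pos n
      have hp1 : (0:ℝ) < 1 + p := by linarith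
      rw [Real.volume_closedBall]
      calc volume (S ∩ Metric.closedBall x (R n)) / ENNReal.ofReal (2 * R n)
          ≤ ENNReal.ofReal (2 * d n) / ENNReal.ofReal (2 * R n) :=
            ENNReal.div_le_div_right hvol2 _
      _ = ENNReal.ofReal (2 * d n / (2 * R n)) :=
            (ENNReal.ofReal_div_of_pos (by linarith)).symm
      _ = ENNReal.ofReal (1/(1+p)) := by
            congr 1
            simp only [hR]
            rw [div_eq_div_iff (by positivity : (0:ℝ) < 2*((1+p)*d n)).ne' hp1.ne']
            ring
    have hcomp := hx.comp hR_lim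
    have hle : (1:ℝ≥0∞) ≤ ENNReal.ofReal (1/(1+p)) :=
      le_of_tendsto hcomp (Filter.Eventually.of_forall fun n => key n)
    have hlt : ENNReal.ofReal (1/(1+p)) < 1 := by
      rw [ENNReal.ofReal_lt_one]
      rw [div_lt_one (by linarith)]
      linarith
    exact absurd hle (not_le.2 hlt)
  have h1 : volume S = (volume.restrict S) S := (Measure.restrict_apply_self _ _).symm
  have h2 : (volume.restrict S) S ≤ (volume.restrict S)
      {x | ¬ Tendsto (fun r => volume (S ∩ Metric.closedBall x r) /
        volume (Metric.closedBall x r)) (𝓝[>] 0) (𝓝 1)} := measure_mono hSsub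
  rw [h1] at hS
  apply hS
  apply le_antisymm _ (zero_le)
  calc (volume.restrict S) S ≤ _ := h2
  _ = 0 := hae


lemma GG_sub01 : GG ⊆ Set.Ioo 0 1 := Set.iUnion_subset fun p => II_subset_Ioo01 p

lemma not_sigmaPorous_FF : ¬ SigmaPorous FF := by
  intro ⟨S, hFS, hS⟩
  have h0 : ∀ n, volume (S n) = 0 := fun n => porous_volume_zero (S n) (hS n)
  have : volume FF = 0 := by
    rw [hFS]
    exact measure_iUnion_null h0
  have h2 := volume_FF
  rw [this] at h2
  simp at h2

end FatCantor


theorem stmt18 :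
    ∃ (f : ℝ → ℝ) (F : Set ℝ),
      IsClosed F ∧ interior F = ∅ ∧ 0 < volume F ∧
      (∀ x : ℝ, DifferentiableAt ℝ f x) ∧
      (∀ x ∈ F, f x = 0) ∧
      -- `f` is locally Lipschitz at every point of the complement of `F` ...
      (∀ x ∉ F, ∃ K : NNReal, ∃ s ∈ 𝓝 x, LipschitzOnWith K f s) ∧
      -- ... and not Lipschitz at any point of `F`, so `ℝ \ F` is the largest open set
      -- on which `f` is locally Lipschitz
      (∀ x ∈ F, ¬ ∃ K : NNReal, ∃ s ∈ 𝓝 x, LipschitzOnWith K f s) ∧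
      ¬ SigmaPorous F := by
  refine ⟨ff, FF, FF_closed, FF_interior, lt_of_lt_of_le (by norm_num) volume_FF,
    ?_, ?_, ?_, ?_, not_sigmaPorous_FF⟩
  · -- differentiability
    intro x
    by_cases hx : x ∈ GG
    · obtain ⟨p, hp⟩ := Set.mem_iUnion.1 hx
      exact (hasDerivAt_ff_II hp).differentiableAt
    · exact (hasDerivAt_ff_zero hx).differentiableAt
  · -- vanishing on F
    intro x hx
    exact ff_eq_zero hx.2
  · -- local Lipschitz off F
    intro x hx
    by_cases hG : x ∈ GG
    · obtain ⟨p, hp⟩ := Set.mem_iUnion.1 hG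
      obtain ⟨K, t, ht, hlip⟩ := (contDiffAt_ff hp).exists_lipschitzOnWith
      exact ⟨K, t, ht, hlip⟩
    · -- x outside [0,1]
      have hx01 : x ∉ Set.Icc (0:ℝ) 1 := fun h => hx ⟨h, hG⟩
      rw [Set.mem_Icc, not_and_or, not_le, not_le] at hx01
      rcases hx01 with h | h
      · refine ⟨1, Set.Iio 0, Iio_mem_nhds h, fun y hy z hz => ?_⟩
        have hy' : ff y = 0 := ff_eq_zero (fun hyG => by
          have := GG_sub01 hyG; exact absurd this.1 (not_lt.2 (le_of_lt hy)))
        have hz' : ff z = 0 := ff_eq_zero (fun hzG => by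
          have := GG_sub01 hzG; exact absurd this.1 (not_lt.2 (le_of_lt hz)))
        simp [edist_dist, hy', hz']
      · refine ⟨1, Set.Ioi 1, Ioi_mem_nhds h, fun y hy z hz => ?_⟩
        have hy' : ff y = 0 := ff_eq_zero (fun hyG => by
          have := GG_sub01 hyG; exact absurd this.2 (not_lt.2 (le_of_lt hy)))
        have hz' : ff z = 0 := ff_eq_zero (fun hzG => by
          have := GG_sub01 hzG; exact absurd this.2 (not_lt.2 (le_of_lt hz)))
        simp [edist_dist, hy', hz']
  · -- not Lipschitz at points of F
    rintro x hx ⟨K, s, hs, hlip⟩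
    obtain ⟨δ, hδ, hball⟩ := Metric.mem_nhds_iff.1 hs
    -- find a point of GG in the ball
    have hxcl : x ∈ closure (Set.Ioo (0:ℝ) 1) := by
      rw [closure_Ioo (by norm_num : (0:ℝ) ≠ 1)]
      exact hx.1
    obtain ⟨y₁, hy₁b, hy₁I⟩ := mem_closure_iff.1 hxcl (Metric.ball x δ) Metric.isOpen_ball
      (Metric.mem_ball_self hδ)
    have hyG : ∃ y ∈ Metric.ball x δ, y ∈ GG := by
      by_contra hcon
      push_neg at hcon
      have hsub : Metric.ball x δ ∩ Set.Ioo 0 1 ⊆ FF := by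
        rintro z ⟨hz1, hz2⟩
        exact ⟨Set.Ioo_subset_Icc_self hz2, hcon z hz1⟩
      have hopen : IsOpen (Metric.ball x δ ∩ Set.Ioo (0:ℝ) 1) :=
        Metric.isOpen_ball.inter isOpen_Ioo
      have : Metric.ball x δ ∩ Set.Ioo (0:ℝ) 1 ⊆ interior FF :=
        hopen.subset_interior_iff.2 hsub
      rw [FF_interior] at this
      exact this ⟨hy₁b, hy₁I⟩
    obtain ⟨y, hyb, hyGG⟩ := hyG
    obtain ⟨p, hp⟩ := Set.mem_iUnion.1 hyGG
    rcases p with ⟨n, k⟩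
    obtain ⟨hk, -, -⟩ := mem_II_lt hp
    rw [mem_II_iff hk] at hp
    have hxI : ¬ (aa n k < x ∧ x < bb n k) := by
      intro hcon
      exact hx.2 (Set.mem_iUnion.2 ⟨(n,k), (mem_II_iff hk).2 hcon⟩)
    rw [not_and_or, not_lt, not_lt] at hxI
    rw [Metric.mem_ball, Real.dist_eq] at hyb
    -- derive the contradiction from a derivative bound
    have hbound : ∀ z d, z ∈ Metric.ball x δ → HasDerivAt ff d z → |d| ≤ K := by
      intro z d hzb hd
      have hsz : s ∈ 𝓝 z := Filter.mem_of_superset (Metric.isOpen_ball.mem_nhds hzb) hball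
      have := hd.hasFDerivAt.le_of_lipschitzOn hsz hlip
      simpa only [ContinuousLinearMap.norm_toSpanSingleton, ContinuousLinearMap.norm_smulRight_apply, norm_one, one_mul,
        Real.norm_eq_abs] using this
    rcases lt_trichotomy x y with hxy | hxy | hxy
    · -- y right of x : x ≤ aa n k
      have hxa : x ≤ aa n k := by
        rcases hxI with h | h
        · exact h
        · exfalso; simp only at hp h; linarith [hp.2]
      obtain ⟨z, d, hz1, hz2, hzd, hzK⟩ := blowup_right hk hp.1 hp.2.le (K:ℝ)
      have hzb : z ∈ Metric.ball x δ := by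
        rw [Metric.mem_ball, Real.dist_eq, abs_lt]
        constructor
        · rw [abs_lt] at hyb; linarith
        · rw [abs_lt] at hyb; linarith
      exact absurd (hbound z d hzb hzd) (not_le.2 hzK)
    · exfalso
      subst hxy
      rcases hxI with h | h
      · simp only at hp h; linarith [hp.1]
      · simp only at hp h; linarith [hp.2]
    · -- y left of x : bb n k ≤ x
      have hxb : bb n k ≤ x := by
        rcases hxI with h | h
        · exfalso; simp only at hp h; linarith [hp.1]
        · exact h
      obtain ⟨z, d, hz1, hz2, hzd, hzK⟩ := blowup_left hk hp.1.le hp.2 (K:ℝ)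
      have hzb : z ∈ Metric.ball x δ := by
        rw [Metric.mem_ball, Real.dist_eq, abs_lt]
        constructor
        · rw [abs_lt] at hyb; linarith
        · rw [abs_lt] at hyb; linarith
      exact absurd (hbound z d hzb hzd) (not_le.2 hzK)
end
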